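/- arXiv:1601.00487 — 11 statements merged into one kernel-verified Lean document; each statement's English description precedes it below -/
import Mathlib

section
/- Let D be a dimension function satisfying the regularized Boltzmann entropy hypothesis with S̃ strictly increasing in each coordinate, and let a, a' ∈ ℝ^{L+1} with a > 0 and a' > 0. Then S̃ a ≤ S̃ a' if and only if for every δ ∈ Δ there exists δ' ∈ Δ such that D_{a,δ}(X) ≤ D_{a',δ'}(X) for all sufficiently large X. (This dimension-dominance condition is exactly the majorization π^{(X)}_{a,δ_X} ≺_M π^{(X)}_{a',δ'_X} of the microcanonical states, i.e., the macroscopic adiabatic accessibility a ≺_ad a' of Theorem 1 of the paper.) -/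
open Filter Topology

/-- A dimension function: `D X b ≥ 1` for `X ≥ 1`, and monotone in `b` coordinatewise. -/
def IsDimFun (L : ℕ) (D : ℕ → (Fin (L + 1) → ℝ) → ℕ) : Prop :=
  (∀ X : ℕ, 1 ≤ X → ∀ b : Fin (L + 1) → ℝ, 1 ≤ D X b) ∧
  (∀ X : ℕ, ∀ b c : Fin (L + 1) → ℝ, (∀ i, b i ≤ c i) → D X b ≤ D X c)

/-- Membership in `Δ`: a positive sequence tending to `0`. -/
def IsDelta (δ : ℕ → ℝ) : Prop :=
  (∀ X : ℕ, 0 < δ X) ∧ Tendsto δ atTop (nhds 0)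

/-- The shell dimension `D_{a,δ}(X)`. -/
def shellDim (L : ℕ) (D : ℕ → (Fin (L + 1) → ℝ) → ℕ) (a : Fin (L + 1) → ℝ)
    (δ : ℕ → ℝ) (X : ℕ) : ℕ :=
  D X (fun i => (1 + δ X) * a i) - D X (fun i => (1 - δ X) * a i)

/-- The regularized Boltzmann entropy hypothesis: `S` is continuous and
`(1/X) log (D X b) → S b` for every `b > 0`. -/
def RegBoltz (L : ℕ) (D : ℕ → (Fin (L + 1) → ℝ) → ℕ) (S : (Fin (L + 1) → ℝ) → ℝ) : Prop :=
  Continuous S ∧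
  ∀ b : Fin (L + 1) → ℝ, (∀ i, 0 < b i) →
    Tendsto (fun X : ℕ => Real.log (D X b) / X) atTop (nhds (S b))

/-- `S` is strictly increasing in each coordinate on the positive orthant. -/
def StrictInc (L : ℕ) (S : (Fin (L + 1) → ℝ) → ℝ) : Prop :=
  ∀ b c : Fin (L + 1) → ℝ, (∀ i, 0 < b i) → (∀ i, 0 < c i) →
    (∀ i, b i ≤ c i) → b ≠ c → S b < S c

/-- `S̄(a)`: sup over `δ ∈ Δ` of the limsup of `(1/X) log D_{a,δ}(X)`, in the extended reals. -/
noncomputable def SbarSup (L : ℕ) (D : ℕ → (Fin (L + 1) → ℝ) → ℕ) (a : Fin (L + 1) → ℝ) : EReal :=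
  ⨆ δ : {δ : ℕ → ℝ // IsDelta δ},
    Filter.limsup (fun X : ℕ => ((Real.log (shellDim L D a δ.1 X) / X : ℝ) : EReal)) atTop

/-- `S̲(a)`: sup over `δ ∈ Δ` of the liminf of `(1/X) log D_{a,δ}(X)`, in the extended reals. -/
noncomputable def SbarInf (L : ℕ) (D : ℕ → (Fin (L + 1) → ℝ) → ℕ) (a : Fin (L + 1) → ℝ) : EReal :=
  ⨆ δ : {δ : ℕ → ℝ // IsDelta δ},
    Filter.liminf (fun X : ℕ => ((Real.log (shellDim L D a δ.1 X) / X : ℝ) : EReal)) atTop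

/-- Total variation distance between the distribution `q` on `ℕ` and the uniform
distribution on `{0, …, d-1}`. -/
noncomputable def TVu (q : ℕ → ℝ) (d : ℕ) : ℝ :=
  (1 / 2) * (∑ i ∈ Finset.range d, |q i - 1 / (d : ℝ)|) + (1 / 2) * (∑' i : ℕ, q (i + d))

noncomputable def epsSeq (n : ℕ) : ℝ := 1 / ((n : ℝ) + 2)

lemma epsSeq_pos (n : ℕ) : 0 < epsSeq n := by unfold epsSeq; positivity

lemma epsSeq_lt_one (n : ℕ) : epsSeq n < 1 := by
  unfold epsSeq
  rw [div_lt_one (by positivity)]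
  have : (0:ℝ) ≤ (n:ℝ) := Nat.cast_nonneg n
  linarith

lemma tendsto_epsSeq : Tendsto epsSeq atTop (nhds 0) := by
  have h1 : Tendsto (fun m : ℕ => ((m:ℝ) + 2)) atTop atTop :=
    tendsto_atTop_add_const_right _ 2 tendsto_natCast_atTop_atTop
  have h2 : epsSeq = fun m : ℕ => ((m:ℝ) + 2)⁻¹ := funext fun m => by
    simp [epsSeq, one_div]
  rw [h2]
  exact tendsto_inv_atTop_zero.comp h1

lemma diagSeq {P : ℕ → ℕ → Prop} (h : ∀ n, ∀ᶠ X in atTop, P n X) :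
    ∃ f : ℕ → ℕ, Tendsto f atTop atTop ∧ ∀ᶠ X in atTop, P (f X) X := by
  classical
  choose N hN using fun n => (eventually_atTop.mp (h n))
  set M : ℕ → ℕ := fun n => (Finset.range (n + 1)).sup N + n with hMdef
  have hMN : ∀ n, N n ≤ M n := fun n =>
    le_trans (Finset.le_sup (Finset.self_mem_range_succ n)) (Nat.le_add_right _ _)
  have hMn : ∀ n, n ≤ M n := fun n => Nat.le_add_left n _
  refine ⟨fun X => Nat.findGreatest (fun n => M n ≤ X) X, ?_, ?_⟩
  · refine tendsto_atTop_atTop.2 fun K => ⟨M K, fun X hX => ?_⟩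
    exact Nat.le_findGreatest (le_trans (hMn K) hX) hX
  · refine eventually_atTop.2 ⟨M 0, fun X hX => ?_⟩
    have h1 : M (Nat.findGreatest (fun n => M n ≤ X) X) ≤ X :=
      Nat.findGreatest_spec (P := fun n => M n ≤ X) (Nat.zero_le X) hX
    exact hN _ X (le_trans (hMN _) h1)

lemma nat_double_lt {A B : ℕ} (hA : 1 ≤ A) (hB : 1 ≤ B)
    (h : Real.log 2 + Real.log A < Real.log B) : 2 * A < B := by
  have hA0 : (0:ℝ) < A := by exact_mod_cast hA
  have hB0 : (0:ℝ) < B := by exact_mod_cast hB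
  have h2A : (0:ℝ) < 2 * A := by positivity
  have hlog : Real.log ((2:ℝ) * A) < Real.log B := by
    rw [Real.log_mul two_ne_zero (ne_of_gt hA0)]; exact h
  have h2 := (Real.log_lt_log_iff h2A hB0).mp hlog
  exact_mod_cast h2

lemma eventually_double {L : ℕ} {D : ℕ → (Fin (L + 1) → ℝ) → ℕ}
    {S : (Fin (L + 1) → ℝ) → ℝ} (hD : IsDimFun L D) (hS : RegBoltz L D S)
    {b c : Fin (L + 1) → ℝ} (hb : ∀ i, 0 < b i) (hc : ∀ i, 0 < c i)
    (hlt : S b < S c) : ∀ᶠ X : ℕ in atTop, 2 * D X b ≤ D X c := by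
  set g := S c - S b with hg
  have hg0 : 0 < g := sub_pos.2 hlt
  have E1 : ∀ᶠ X : ℕ in atTop, Real.log (D X b) / X < S b + g / 3 :=
    Filter.Tendsto.eventually_lt_const (by linarith) (hS.2 b hb)
  have E2 : ∀ᶠ X : ℕ in atTop, S c - g / 3 < Real.log (D X c) / X :=
    Filter.Tendsto.eventually_const_lt (by linarith) (hS.2 c hc)
  have hmul : Tendsto (fun X : ℕ => (g / 3) * X) atTop atTop :=
    Tendsto.const_mul_atTop (by linarith) tendsto_natCast_atTop_atTop
  have E3 : ∀ᶠ X : ℕ in atTop, Real.log 2 < (g / 3) * X := hmul.eventually_gt_atTop _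
  filter_upwards [E1, E2, E3, eventually_ge_atTop 1] with X e1 e2 e3 e4
  have hX0 : (0:ℝ) < X := by exact_mod_cast e4
  have l1 : Real.log (D X b) < (S b + g / 3) * X := by
    rw [div_lt_iff₀ hX0] at e1; exact e1
  have l2 : (S c - g / 3) * X < Real.log (D X c) := by
    rw [lt_div_iff₀ hX0] at e2; exact e2
  have hsum : (g / 3) * X + (S b + g / 3) * X = (S c - g / 3) * X := by
    rw [hg]; ring
  have := nat_double_lt (hD.1 X e4 b) (hD.1 X e4 c) (by linarith)
  omega

lemma tendsto_S_scale {L : ℕ} {S : (Fin (L + 1) → ℝ) → ℝ} (hcont : Continuous S)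
    (a : Fin (L + 1) → ℝ) :
    Tendsto (fun m : ℕ => S (fun i => (1 + epsSeq m) * a i)) atTop (nhds (S a)) := by
  have hc : Continuous fun t : ℝ => S (fun i => (1 + t) * a i) :=
    hcont.comp (continuous_pi fun i => (continuous_const.add continuous_id).mul continuous_const)
  have := (hc.tendsto 0).comp tendsto_epsSeq
  simpa [Function.comp_def] using this

lemma S_lt_scale {L : ℕ} {S : (Fin (L + 1) → ℝ) → ℝ} (hSI : StrictInc L S)
    {a : Fin (L + 1) → ℝ} (ha : ∀ i, 0 < a i) {ε : ℝ} (hε : 0 < ε) :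
    S a < S (fun i => (1 + ε) * a i) := by
  refine hSI a _ ha (fun i => mul_pos (by linarith) (ha i))
    (fun i => by nlinarith [ha i]) ?_
  intro h
  have := congrFun h 0
  nlinarith [ha 0]

lemma S_scale_lt {L : ℕ} {S : (Fin (L + 1) → ℝ) → ℝ} (hSI : StrictInc L S)
    {a : Fin (L + 1) → ℝ} (ha : ∀ i, 0 < a i) {ε : ℝ} (hε : 0 < ε) (hε1 : ε < 1) :
    S (fun i => (1 - ε) * a i) < S a := by
  refine hSI _ a (fun i => mul_pos (by linarith) (ha i)) ha
    (fun i => by nlinarith [ha i]) ?_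
  intro h
  have := congrFun h 0
  nlinarith [ha 0]

/-- Theorem 1 of the paper: the regularized Boltzmann entropy determines
macroscopic adiabatic accessibility (expressed via shell-dimension dominance). -/
theorem stmt_0 {L : ℕ} (D : ℕ → (Fin (L + 1) → ℝ) → ℕ) (S : (Fin (L + 1) → ℝ) → ℝ)
    (hD : IsDimFun L D) (hS : RegBoltz L D S) (hSI : StrictInc L S)
    (a a' : Fin (L + 1) → ℝ) (ha : ∀ i, 0 < a i) (ha' : ∀ i, 0 < a' i) :
    S a ≤ S a' ↔
      ∀ δ : ℕ → ℝ, IsDelta δ → ∃ δ' : ℕ → ℝ, IsDelta δ' ∧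
        ∃ X₀ : ℕ, ∀ X ≥ X₀, shellDim L D a δ X ≤ shellDim L D a' δ' X := by
  constructor
  · -- forward direction
    intro hle δ hδ
    have key : ∀ n : ℕ, ∀ᶠ X in atTop,
        shellDim L D a δ X ≤
          D X (fun i => (1 + epsSeq n) * a' i) - D X (fun i => (1 - epsSeq n) * a' i) := by
      intro n
      have hp1 : ∀ i, 0 < (1 + epsSeq n) * a' i :=
        fun i => mul_pos (by linarith [epsSeq_pos n]) (ha' i)
      have hp2 : ∀ i, 0 < (1 - epsSeq n) * a' i :=
        fun i => mul_pos (by linarith [epsSeq_lt_one n]) (ha' i)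
      have hK : S a < S (fun i => (1 + epsSeq n) * a' i) :=
        lt_of_le_of_lt hle (S_lt_scale hSI ha' (epsSeq_pos n))
      obtain ⟨m, hm⟩ := (Filter.Tendsto.eventually_lt_const hK (tendsto_S_scale hS.1 a)).exists
      have hpm : ∀ i, 0 < (1 + epsSeq m) * a i :=
        fun i => mul_pos (by linarith [epsSeq_pos m]) (ha i)
      have F1 : ∀ᶠ X : ℕ in atTop, δ X < epsSeq m :=
        Filter.Tendsto.eventually_lt_const (epsSeq_pos m) hδ.2
      have F2 : ∀ᶠ X : ℕ in atTop,
          2 * D X (fun i => (1 + epsSeq m) * a i) ≤ D X (fun i => (1 + epsSeq n) * a' i) :=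
        eventually_double hD hS hpm hp1 hm
      have F3 : ∀ᶠ X : ℕ in atTop,
          2 * D X (fun i => (1 - epsSeq n) * a' i) ≤ D X (fun i => (1 + epsSeq n) * a' i) :=
        eventually_double hD hS hp2 hp1
          (lt_trans (S_scale_lt hSI ha' (epsSeq_pos n) (epsSeq_lt_one n))
            (S_lt_scale hSI ha' (epsSeq_pos n)))
      filter_upwards [F1, F2, F3] with X f1 f2 f3
      have step1 : shellDim L D a δ X ≤ D X (fun i => (1 + δ X) * a i) := Nat.sub_le _ _
      have step2 : D X (fun i => (1 + δ X) * a i) ≤ D X (fun i => (1 + epsSeq m) * a i) :=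
        hD.2 X _ _ (fun i => mul_le_mul_of_nonneg_right (by linarith) (ha i).le)
      omega
    obtain ⟨f, hf, hfP⟩ := diagSeq key
    refine ⟨fun X => epsSeq (f X), ⟨fun X => epsSeq_pos _, tendsto_epsSeq.comp hf⟩, ?_⟩
    obtain ⟨X₀, hX₀⟩ := eventually_atTop.mp hfP
    exact ⟨X₀, fun X hX => by simpa [shellDim] using hX₀ X hX⟩
  · -- reverse direction
    intro H
    have key : ∀ n : ℕ, ∀ᶠ X : ℕ in atTop,
        2 * D X (fun i => (1 - epsSeq n) * a i) ≤ D X (fun i => (1 + epsSeq n) * a i) ∧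
        S a - epsSeq n ≤ Real.log (D X (fun i => (1 + epsSeq n) * a i)) / X := by
      intro n
      have hp1 : ∀ i, 0 < (1 + epsSeq n) * a i :=
        fun i => mul_pos (by linarith [epsSeq_pos n]) (ha i)
      have hp2 : ∀ i, 0 < (1 - epsSeq n) * a i :=
        fun i => mul_pos (by linarith [epsSeq_lt_one n]) (ha i)
      have Ea := eventually_double hD hS hp2 hp1
        (lt_trans (S_scale_lt hSI ha (epsSeq_pos n) (epsSeq_lt_one n))
          (S_lt_scale hSI ha (epsSeq_pos n)))
      have Eb : ∀ᶠ X : ℕ in atTop,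
          S a - epsSeq n < Real.log (D X (fun i => (1 + epsSeq n) * a i)) / X :=
        Filter.Tendsto.eventually_const_lt
          (by linarith [S_lt_scale hSI ha (epsSeq_pos n), epsSeq_pos n]) (hS.2 _ hp1)
      filter_upwards [Ea, Eb] with X e1 e2
      exact ⟨e1, e2.le⟩
    obtain ⟨f, hf, hfP⟩ := diagSeq key
    have hδ : IsDelta (fun X => epsSeq (f X)) :=
      ⟨fun X => epsSeq_pos _, tendsto_epsSeq.comp hf⟩
    obtain ⟨δ', hδ', X₀, hdom⟩ := H (fun X => epsSeq (f X)) hδ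
    have main : ∀ m : ℕ, S a ≤ S (fun i => (1 + epsSeq m) * a' i) := by
      intro m
      have hp1' : ∀ i, 0 < (1 + epsSeq m) * a' i :=
        fun i => mul_pos (by linarith [epsSeq_pos m]) (ha' i)
      have hB := hS.2 (fun i => (1 + epsSeq m) * a' i) hp1'
      have hgt : Tendsto (fun X : ℕ => S a - epsSeq (f X)) atTop (nhds (S a)) := by
        have h0 : Tendsto (fun X : ℕ => epsSeq (f X)) atTop (nhds 0) := tendsto_epsSeq.comp hf
        simpa using tendsto_const_nhds.sub h0
      have hht : Tendsto (fun X : ℕ =>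
          Real.log 2 / (X:ℝ) + Real.log (D X (fun i => (1 + epsSeq m) * a' i)) / X)
          atTop (nhds (S (fun i => (1 + epsSeq m) * a' i))) := by
        simpa using (tendsto_const_div_atTop_nhds_zero_nat (Real.log 2)).add hB
      have hev : ∀ᶠ X : ℕ in atTop, S a - epsSeq (f X) ≤
          Real.log 2 / (X:ℝ) + Real.log (D X (fun i => (1 + epsSeq m) * a' i)) / X := by
        have F1 : ∀ᶠ X : ℕ in atTop, δ' X < epsSeq m :=
          Filter.Tendsto.eventually_lt_const (epsSeq_pos m) hδ'.2
        filter_upwards [hfP, F1, eventually_ge_atTop X₀, eventually_ge_atTop 1]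
          with X hQ f1 f2 f3
        obtain ⟨q1, q2⟩ := hQ
        have hX0 : (0:ℝ) < X := by exact_mod_cast f3
        set A := D X (fun i => (1 + epsSeq (f X)) * a i) with hA
        set B := D X (fun i => (1 + epsSeq m) * a' i) with hB'
        have hAsd : A ≤ 2 * shellDim L D a (fun X => epsSeq (f X)) X := by
          simp only [shellDim]
          omega
        have hsd' : shellDim L D a' δ' X ≤ D X (fun i => (1 + δ' X) * a' i) := Nat.sub_le _ _
        have hmono : D X (fun i => (1 + δ' X) * a' i) ≤ B :=
          hD.2 X _ _ (fun i => mul_le_mul_of_nonneg_right (by linarith) (ha' i).le)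
        have hAB : A ≤ 2 * B := by
          have := hdom X f2
          omega
        have hA1 : 1 ≤ A := hD.1 X f3 _
        have hB1 : 1 ≤ B := hD.1 X f3 _
        have hA0 : (0:ℝ) < A := by exact_mod_cast hA1
        have hB0 : (0:ℝ) < B := by exact_mod_cast hB1
        have hABr : (A:ℝ) ≤ 2 * B := by exact_mod_cast hAB
        have hlog : Real.log A ≤ Real.log 2 + Real.log B := by
          have := Real.log_le_log hA0 hABr
          rwa [Real.log_mul two_ne_zero (ne_of_gt hB0)] at this
        have hdiv : Real.log A / X ≤ (Real.log 2 + Real.log B) / X := by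
          gcongr
        calc S a - epsSeq (f X) ≤ Real.log A / X := q2
          _ ≤ (Real.log 2 + Real.log B) / X := hdiv
          _ = Real.log 2 / (X:ℝ) + Real.log B / X := by rw [add_div]
      exact le_of_tendsto_of_tendsto hgt hht hev
    exact ge_of_tendsto' (tendsto_S_scale hS.1 a') main
end

section
/- Let D be a dimension function satisfying the regularized Boltzmann entropy hypothesis with S̃ strictly increasing in each coordinate, and let a, a' ∈ ℝ^{L+1} with a > 0 and a' > 0. If S̃ a < S̃ a', then for every δ ∈ Δ there exists δ' ∈ Δ such that D_{a,δ}(X) ≤ D_{a',δ'}(X) for all sufficiently large X. -/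
open Filter Topology

lemma key_dom {L : ℕ} (D : ℕ → (Fin (L + 1) → ℝ) → ℕ) (S : (Fin (L + 1) → ℝ) → ℝ)
    (hD1 : ∀ X : ℕ, 1 ≤ X → ∀ b : Fin (L + 1) → ℝ, 1 ≤ D X b)
    (hten : ∀ b : Fin (L + 1) → ℝ, (∀ i, 0 < b i) →
      Tendsto (fun X : ℕ => Real.log (D X b) / X) atTop (nhds (S b)))
    (b b' c' : Fin (L + 1) → ℝ) (hbp : ∀ i, 0 < b i) (hb'p : ∀ i, 0 < b' i)
    (hc'p : ∀ i, 0 < c' i) (h1 : S b < S c') (h2 : S b' < S c') :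
    ∀ᶠ X in atTop, D X b + D X b' ≤ D X c' := by
  obtain ⟨m, m', hbm, hb'm, hmm', hm'c⟩ :
      ∃ m m' : ℝ, S b < m ∧ S b' < m ∧ m < m' ∧ m' < S c' := by
    have h1' := le_max_left (S b) (S b')
    have h2' := le_max_right (S b) (S b')
    have h3' := max_lt h1 h2
    exact ⟨max (S b) (S b') + (S c' - max (S b) (S b')) / 3,
      max (S b) (S b') + 2 * (S c' - max (S b) (S b')) / 3,
      by linarith, by linarith, by linarith, by linarith⟩
  have E1 := (hten b hbp).eventually_lt_const hbm
  have E2 := (hten b' hb'p).eventually_lt_const hb'm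
  have E3 := (hten c' hc'p).eventually_const_lt hm'c
  have E4 : ∀ᶠ X : ℕ in atTop, (2 : ℝ) ≤ Real.exp ((m' - m) * X) := by
    have h : Tendsto (fun X : ℕ => Real.exp ((m' - m) * X)) atTop atTop :=
      Real.tendsto_exp_atTop.comp
        (Tendsto.const_mul_atTop (by linarith) tendsto_natCast_atTop_atTop)
    exact h.eventually_ge_atTop 2
  filter_upwards [E1, E2, E3, E4, eventually_ge_atTop 1] with X h1' h2' h3' h4' hX
  have hXpos : (0 : ℝ) < X := by exact_mod_cast hX
  have hcast : ∀ v : Fin (L + 1) → ℝ, (0 : ℝ) < D X v := by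
    intro v; exact_mod_cast hD1 X hX v
  have hDb : (D X b : ℝ) ≤ Real.exp (m * X) := by
    have hlog : Real.log (D X b) < m * X := (div_lt_iff₀ hXpos).mp h1'
    calc (D X b : ℝ) = Real.exp (Real.log (D X b)) := (Real.exp_log (hcast b)).symm
      _ ≤ Real.exp (m * X) := Real.exp_le_exp.mpr hlog.le
  have hDb' : (D X b' : ℝ) ≤ Real.exp (m * X) := by
    have hlog : Real.log (D X b') < m * X := (div_lt_iff₀ hXpos).mp h2'
    calc (D X b' : ℝ) = Real.exp (Real.log (D X b')) := (Real.exp_log (hcast b')).symm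
      _ ≤ Real.exp (m * X) := Real.exp_le_exp.mpr hlog.le
  have hDc' : Real.exp (m' * X) ≤ (D X c' : ℝ) := by
    have hlog : m' * X < Real.log (D X c') := (lt_div_iff₀ hXpos).mp h3'
    calc Real.exp (m' * X) ≤ Real.exp (Real.log (D X c')) := Real.exp_le_exp.mpr hlog.le
      _ = (D X c' : ℝ) := Real.exp_log (hcast c')
  have hexp : 2 * Real.exp (m * X) ≤ Real.exp (m' * X) := by
    have : Real.exp (m' * X) = Real.exp ((m' - m) * X) * Real.exp (m * X) := by
      rw [← Real.exp_add]; ring_nf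
    rw [this]
    have := Real.exp_pos (m * X)
    nlinarith [h4']
  have : (D X b : ℝ) + (D X b' : ℝ) ≤ (D X c' : ℝ) := by linarith
  exact_mod_cast this

/-- If `S̃ a < S̃ a'` then the shell dimension of `a` is eventually dominated by one of `a'`. -/
theorem stmt_1 {L : ℕ} (D : ℕ → (Fin (L + 1) → ℝ) → ℕ) (S : (Fin (L + 1) → ℝ) → ℝ)
    (hD : IsDimFun L D) (hS : RegBoltz L D S) (hSI : StrictInc L S)
    (a a' : Fin (L + 1) → ℝ) (ha : ∀ i, 0 < a i) (ha' : ∀ i, 0 < a' i)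
    (hlt : S a < S a') :
    ∀ δ : ℕ → ℝ, IsDelta δ → ∃ δ' : ℕ → ℝ, IsDelta δ' ∧
      ∃ X₀ : ℕ, ∀ X ≥ X₀, shellDim L D a δ X ≤ shellDim L D a' δ' X := by
  intro δ hδ
  obtain ⟨hScont, hStend⟩ := hS
  obtain ⟨hD1, hDmono⟩ := hD
  -- find ε > 0 with S ((1+ε)•a) < S a'
  have hg : Tendsto (fun n : ℕ => S (fun i => (1 + 1 / ((n : ℝ) + 1)) * a i)) atTop
      (nhds (S a)) := by
    have h1 : Tendsto (fun n : ℕ => (1 : ℝ) / ((n : ℝ) + 1)) atTop (nhds 0) :=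
      tendsto_one_div_add_atTop_nhds_zero_nat
    have hc : Continuous (fun t : ℝ => S (fun i => (1 + t) * a i)) := by
      apply hScont.comp; continuity
    have h2 := (hc.tendsto 0).comp h1
    simpa [Function.comp_def] using h2
  obtain ⟨n₀, hn₀⟩ := (hg.eventually_lt_const hlt).exists
  set ε : ℝ := 1 / ((n₀ : ℝ) + 1) with hεdef
  have hεpos : 0 < ε := by positivity
  set b : Fin (L + 1) → ℝ := fun i => (1 + ε) * a i with hbdef
  have hbpos : ∀ i, 0 < b i := fun i => mul_pos (by linarith) (ha i)
  have hSb : S b < S a' := hn₀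
  -- the family indexed by n
  set η : ℕ → ℝ := fun n => 1 / ((n : ℝ) + 2) with hηdef
  have hηpos : ∀ n, 0 < η n := fun n => by positivity
  have hηlt : ∀ n, η n < 1 := fun n => by
    rw [hηdef]; rw [div_lt_one (by positivity)]
    have : (0 : ℝ) ≤ (n : ℝ) := Nat.cast_nonneg n
    linarith
  set B' : ℕ → Fin (L + 1) → ℝ := fun n i => (1 - η n) * a' i with hB'def
  set C' : ℕ → Fin (L + 1) → ℝ := fun n i => (1 + η n) * a' i with hC'def
  have hB'pos : ∀ n i, 0 < B' n i := fun n i =>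
    mul_pos (by have := hηlt n; linarith) (ha' i)
  have hC'pos : ∀ n i, 0 < C' n i := fun n i =>
    mul_pos (by have := hηpos n; linarith) (ha' i)
  have hSa'C : ∀ n, S a' < S (C' n) := by
    intro n
    apply hSI a' (C' n) ha' (hC'pos n)
    · intro i
      have h := (hηpos n).le
      simp only [hC'def]
      nlinarith [mul_nonneg h (ha' i).le]
    · intro h
      have h0 := congrFun h 0
      simp only [hC'def] at h0
      nlinarith [ha' 0, hηpos n]
  have hSB'C : ∀ n, S (B' n) < S (C' n) := by
    intro n
    apply hSI (B' n) (C' n) (hB'pos n) (hC'pos n)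
    · intro i
      simp only [hB'def, hC'def]
      nlinarith [mul_nonneg (hηpos n).le (ha' i).le]
    · intro h
      have h0 := congrFun h 0
      simp only [hB'def, hC'def] at h0
      nlinarith [ha' 0, hηpos n]
  have hkey : ∀ n : ℕ, ∀ᶠ X in atTop, D X b + D X (B' n) ≤ D X (C' n) := by
    intro n
    exact key_dom D S hD1 hStend b (B' n) (C' n) hbpos (hB'pos n) (hC'pos n)
      (hSb.trans (hSa'C n)) (hSB'C n)
  choose N hN using fun n => (eventually_atTop.mp (hkey n))
  -- the diagonal sequence
  set M : ℕ → ℕ := fun n => n + (Finset.range (n + 1)).sum N with hMdef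
  have hNM : ∀ n, N n ≤ M n := by
    intro n
    have : N n ≤ (Finset.range (n + 1)).sum N :=
      Finset.single_le_sum (fun i _ => Nat.zero_le (N i))
        (Finset.self_mem_range_succ n)
    simp only [hMdef]
    omega
  have hnM : ∀ n, n ≤ M n := fun n => Nat.le_add_right _ _
  set f : ℕ → ℕ := fun X => Nat.findGreatest (fun n => M n ≤ X) X with hfdef
  have hf_ge : ∀ n X : ℕ, M n ≤ X → n ≤ f X := fun n X h =>
    Nat.le_findGreatest ((hnM n).trans h) h
  have hf_spec : ∀ X : ℕ, M 0 ≤ X → M (f X) ≤ X := fun X h =>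
    Nat.findGreatest_spec (P := fun n => M n ≤ X) (Nat.zero_le X) h
  set δ' : ℕ → ℝ := fun X => η (f X) with hδ'def
  refine ⟨δ', ⟨fun X => hηpos _, ?_⟩, ?_⟩
  · -- δ' tends to 0
    have hftop : Tendsto f atTop atTop := by
      rw [tendsto_atTop]
      intro n
      filter_upwards [eventually_ge_atTop (M n)] with X hX
      exact hf_ge n X hX
    have hη0 : Tendsto η atTop (nhds 0) := by
      have h1 : Tendsto (fun n : ℕ => (n : ℝ) + 2) atTop atTop :=
        tendsto_atTop_add_const_right _ _ tendsto_natCast_atTop_atTop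
      have := h1.inv_tendsto_atTop
      simpa [hηdef, one_div, Pi.inv_def] using this
    exact hη0.comp hftop
  · -- the eventual inequality
    have hδsmall : ∀ᶠ X in atTop, δ X < ε := hδ.2.eventually_lt_const hεpos
    obtain ⟨X₁, hX₁⟩ := eventually_atTop.mp hδsmall
    refine ⟨max X₁ (M 0), fun X hX => ?_⟩
    have hXX₁ : X₁ ≤ X := le_trans (le_max_left _ _) hX
    have hXM0 : M 0 ≤ X := le_trans (le_max_right _ _) hX
    have hδX : δ X < ε := hX₁ X hXX₁
    have step1 : shellDim L D a δ X ≤ D X b := by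
      refine le_trans (Nat.sub_le _ _) (hDmono X _ b fun i => ?_)
      exact mul_le_mul_of_nonneg_right (by linarith) (ha i).le
    have hMfX : M (f X) ≤ X := hf_spec X hXM0
    have hNfX : N (f X) ≤ X := (hNM (f X)).trans hMfX
    have step2 : D X b + D X (B' (f X)) ≤ D X (C' (f X)) := hN (f X) X hNfX
    have step3 : shellDim L D a' δ' X = D X (C' (f X)) - D X (B' (f X)) := rfl
    rw [step3]
    exact le_trans step1 (Nat.le_sub_of_add_le step2)
end

section
/- Let D be a dimension function satisfying the regularized Boltzmann entropy hypothesis with S̃ strictly increasing in each coordinate, and let a, a' ∈ ℝ^{L+1} with a > 0 and a' > 0. If S̃ a = S̃ a', then for every δ ∈ Δ there exists δ' ∈ Δ such that D_{a,δ}(X) < D_{a',δ'}(X) for all sufficiently large X. -/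
open Filter Topology

lemma key {L : ℕ} (D : ℕ → (Fin (L + 1) → ℝ) → ℕ) (S : (Fin (L + 1) → ℝ) → ℝ)
    (hD : IsDimFun L D) (hS : RegBoltz L D S) (hSI : StrictInc L S)
    (a a' : Fin (L + 1) → ℝ) (ha : ∀ i, 0 < a i) (ha' : ∀ i, 0 < a' i)
    (heq : S a = S a') (δ : ℕ → ℝ) (hδ : IsDelta δ) (c : ℝ) (hc0 : 0 < c) (hc1 : c < 1) :
    ∀ᶠ X in atTop, shellDim L D a δ X <
      D X (fun i => (1 + c) * a' i) - D X (fun i => (1 - c) * a' i) := by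
  obtain ⟨hcont, hlim⟩ := hS
  set A := S (fun i => (1 + c) * a' i) with hA
  set B := S (fun i => (1 - c) * a' i) with hB
  -- S a' < A
  have hup : ∀ i, (0:ℝ) < (1 + c) * a' i := fun i => by nlinarith [ha' i]
  have hdn : ∀ i, (0:ℝ) < (1 - c) * a' i := fun i => by nlinarith [ha' i]
  have hSA : S a' < A := by
    apply hSI a' _ ha' hup (fun i => by nlinarith [ha' i])
    intro h
    have := congrFun h 0
    nlinarith [ha' 0]
  have hBA : B < S a' := by
    apply hSI _ a' hdn ha' (fun i => by nlinarith [ha' i])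
    intro h
    have := congrFun h 0
    nlinarith [ha' 0]
  -- choose ε > 0 with S((1+ε)a) < A
  have hφ : Continuous (fun t : ℝ => S (fun i => (1 + t) * a i)) := by
    apply hcont.comp
    exact continuous_pi fun i => by continuity
  have h0 : S (fun i => (1 + (0:ℝ)) * a i) < A := by
    simpa [heq] using hSA
  have hev : ∀ᶠ t : ℝ in nhds 0, S (fun i => (1 + t) * a i) < A :=
    (hφ.continuousAt).eventually_lt continuousAt_const h0
  rw [Metric.eventually_nhds_iff] at hev
  obtain ⟨r, hr, hrev⟩ := hev
  set ε := r / 2 with hε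
  have hε0 : 0 < ε := by positivity
  have hCA : S (fun i => (1 + ε) * a i) < A := by
    apply hrev
    simp only [Real.dist_eq, sub_zero]
    rw [abs_of_pos hε0]; linarith
  set C := S (fun i => (1 + ε) * a i) with hC
  set m := max B C with hm
  have hmA : m < A := max_lt (by linarith) hCA
  set η := (A - m) / 3 with hη
  have hη0 : 0 < η := by simp only [hη]; linarith
  clear_value η m C ε A B
  -- eventual bounds
  have e1 : ∀ᶠ X : ℕ in atTop, A - η < Real.log (D X (fun i => (1 + c) * a' i)) / X :=
    (hlim _ hup).eventually (eventually_gt_nhds (by linarith))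
  have e2 : ∀ᶠ X : ℕ in atTop, Real.log (D X (fun i => (1 - c) * a' i)) / X < B + η :=
    (hlim _ hdn).eventually (eventually_lt_nhds (by linarith))
  have e3 : ∀ᶠ X : ℕ in atTop,
      Real.log (D X (fun i => (1 + ε) * a i)) / X < C + η :=
    (hlim _ (fun i => by nlinarith [ha i])).eventually (eventually_lt_nhds (by linarith))
  have e4 : ∀ᶠ X : ℕ in atTop, δ X ≤ ε := hδ.2.eventually (eventually_le_nhds hε0)
  have e5 : ∀ᶠ X : ℕ in atTop, (2:ℝ) ≤ Real.exp (η * X) := by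
    have h1 : Tendsto (fun X : ℕ => η * (X:ℝ)) atTop atTop :=
      (tendsto_natCast_atTop_atTop).const_mul_atTop hη0
    exact (Real.tendsto_exp_atTop.comp h1).eventually_ge_atTop 2
  have e6 : ∀ᶠ X : ℕ in atTop, 1 ≤ X := eventually_ge_atTop 1
  filter_upwards [e1, e2, e3, e4, e5, e6] with X h1 h2 h3 h4 h5 h6
  have hX0 : (0:ℝ) < X := by exact_mod_cast h6
  have hpos : ∀ b : Fin (L+1) → ℝ, (1:ℝ) ≤ D X b := fun b => by
    exact_mod_cast hD.1 X h6 b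
  -- lower bound on D X ((1+c)a')
  have hlo : Real.exp ((A - η) * X) < (D X (fun i => (1 + c) * a' i) : ℝ) := by
    have h1' : (A - η) * X < Real.log (D X (fun i => (1 + c) * a' i)) :=
      (lt_div_iff₀ hX0).mp h1
    calc Real.exp ((A - η) * X) < Real.exp (Real.log (D X (fun i => (1 + c) * a' i))) :=
          Real.exp_lt_exp.mpr h1'
      _ = _ := Real.exp_log (by linarith [hpos (fun i => (1 + c) * a' i)])
  have hub : ∀ b : Fin (L+1) → ℝ, ∀ t : ℝ, Real.log (D X b) / X < t →
      (D X b : ℝ) < Real.exp (t * X) := by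
    intro b t ht
    have h := (div_lt_iff₀ hX0).mp ht
    calc (D X b : ℝ) = Real.exp (Real.log (D X b)) :=
          (Real.exp_log (by linarith [hpos b])).symm
      _ < Real.exp (t * X) := Real.exp_lt_exp.mpr h
  have h2' := hub _ _ h2
  have h3' := hub _ _ h3
  -- monotonicity for the δ shell
  have hmono : D X (fun i => (1 + δ X) * a i) ≤ D X (fun i => (1 + ε) * a i) :=
    hD.2 X _ _ (fun i => by nlinarith [ha i, (hδ.1 X)])
  have hshell : (shellDim L D a δ X : ℝ) ≤ (D X (fun i => (1 + ε) * a i) : ℝ) := by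
    have : shellDim L D a δ X ≤ D X (fun i => (1 + δ X) * a i) := Nat.sub_le _ _
    exact_mod_cast le_trans this hmono
  rw [Nat.lt_sub_iff_add_lt]
  have hkey : (shellDim L D a δ X : ℝ) + (D X (fun i => (1 - c) * a' i) : ℝ) <
      (D X (fun i => (1 + c) * a' i) : ℝ) := by
    have hBm : Real.exp ((B + η) * X) ≤ Real.exp ((m + η) * X) :=
      Real.exp_le_exp.mpr
        (mul_le_mul_of_nonneg_right (by linarith [le_max_left B C]) hX0.le)
    have hCm : Real.exp ((C + η) * X) ≤ Real.exp ((m + η) * X) :=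
      Real.exp_le_exp.mpr
        (mul_le_mul_of_nonneg_right (by linarith [le_max_right B C]) hX0.le)
    have h2e : (2:ℝ) * Real.exp ((m + η) * X) ≤ Real.exp ((A - η) * X) := by
      have heq2 : Real.exp (η * X) * Real.exp ((m + η) * X) = Real.exp ((A - η) * X) := by
        rw [← Real.exp_add]
        congr 1
        rw [hη]; ring
      have := mul_le_mul_of_nonneg_right h5 (Real.exp_pos ((m + η) * X)).le
      linarith
    linarith
  exact_mod_cast hkey

/-- If `S̃ a = S̃ a'` then the shell dimension of `a` is eventually strictly dominated
by one of `a'`. -/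
theorem stmt_2 {L : ℕ} (D : ℕ → (Fin (L + 1) → ℝ) → ℕ) (S : (Fin (L + 1) → ℝ) → ℝ)
    (hD : IsDimFun L D) (hS : RegBoltz L D S) (hSI : StrictInc L S)
    (a a' : Fin (L + 1) → ℝ) (ha : ∀ i, 0 < a i) (ha' : ∀ i, 0 < a' i)
    (heq : S a = S a') :
    ∀ δ : ℕ → ℝ, IsDelta δ → ∃ δ' : ℕ → ℝ, IsDelta δ' ∧
      ∃ X₀ : ℕ, ∀ X ≥ X₀, shellDim L D a δ X < shellDim L D a' δ' X := by
  intro δ hδ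
  -- for each n, the key lemma with c = 1/(n+2)
  have hkey : ∀ n : ℕ, ∃ N : ℕ, ∀ X ≥ N, shellDim L D a δ X <
      D X (fun i => (1 + 1/((n:ℝ)+2)) * a' i) - D X (fun i => (1 - 1/((n:ℝ)+2)) * a' i) := by
    intro n
    have hc0 : (0:ℝ) < 1/((n:ℝ)+2) := by positivity
    have hc1 : 1/((n:ℝ)+2) < 1 := by
      rw [div_lt_one (by positivity)]
      have : (0:ℝ) ≤ (n:ℝ) := Nat.cast_nonneg n
      linarith
    exact eventually_atTop.mp (key D S hD hS hSI a a' ha ha' heq δ hδ _ hc0 hc1)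
  choose N hN using hkey
  -- monotone envelope
  set N' : ℕ → ℕ := fun n => n + (Finset.range (n+1)).sup N with hN'
  have hN'ge : ∀ n, N n ≤ N' n := fun n =>
    le_add_of_le_right (Finset.le_sup (Finset.self_mem_range_succ n))
  have hN'n : ∀ n, n ≤ N' n := fun n => Nat.le_add_right n _
  set g : ℕ → ℕ := fun X => Nat.findGreatest (fun n => N' n ≤ X) X with hg
  set δ' : ℕ → ℝ := fun X => 1/((g X : ℝ) + 2) with hδ'
  refine ⟨δ', ⟨fun X => by positivity, ?_⟩, N' 0, ?_⟩
  · -- tendsto 0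
    have hgtop : Tendsto g atTop atTop := by
      rw [tendsto_atTop]
      intro n
      filter_upwards [eventually_ge_atTop (N' n)] with X hX
      exact Nat.le_findGreatest (le_trans (hN'n n) hX) hX
    have h1 : Tendsto (fun X : ℕ => ((g X : ℝ) + 2)) atTop atTop :=
      tendsto_atTop_add_const_right _ 2 (tendsto_natCast_atTop_atTop.comp hgtop)
    have := tendsto_inv_atTop_zero.comp h1
    simpa [hδ', one_div, Function.comp_def] using this
  · intro X hX
    have hspec : N' (g X) ≤ X :=
      Nat.findGreatest_spec (P := fun n => N' n ≤ X) (Nat.zero_le X) hX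
    have := hN (g X) X (le_trans (hN'ge (g X)) hspec)
    simpa [shellDim, hδ'] using this
end

section
/- Let D be a dimension function satisfying the regularized Boltzmann entropy hypothesis with S̃ strictly increasing in each coordinate, and let a, a' ∈ ℝ^{L+1} with a > 0 and a' > 0. Suppose S̃ a > S̃ a' and set s := S̃ a − S̃ a' > 0. Then there exists δ ∈ Δ such that for every δ' ∈ Δ, for all sufficiently large X: D_{a,δ}(X) ≥ 1 and D_{a',δ'}(X) < e^{−X·s/2}·D_{a,δ}(X). -/
set_option maxHeartbeats 1000000


open Filter Topology

private lemma ratio_ev {L : ℕ} (D : ℕ → (Fin (L + 1) → ℝ) → ℕ)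
    (S : (Fin (L + 1) → ℝ) → ℝ) (hD : IsDimFun L D) (hS : RegBoltz L D S)
    {b c : Fin (L + 1) → ℝ} (hb : ∀ i, 0 < b i) (hc : ∀ i, 0 < c i)
    (hlt : S b < S c) :
    ∀ᶠ X : ℕ in atTop, 1 ≤ X ∧ 2 * D X b ≤ D X c := by
  have hdiff : Tendsto
      (fun X : ℕ => Real.log (D X c) / X - Real.log (D X b) / X)
      atTop (nhds (S c - S b)) := (hS.2 c hc).sub (hS.2 b hb)
  have htpos : 0 < (S c - S b) / 2 := by linarith
  have h1 : ∀ᶠ X : ℕ in atTop,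
      (S c - S b) / 2 < Real.log (D X c) / X - Real.log (D X b) / X :=
    hdiff.eventually (eventually_gt_nhds (by linarith))
  have h2 : ∀ᶠ X : ℕ in atTop, Real.log 2 < (X : ℝ) * ((S c - S b) / 2) :=
    (tendsto_natCast_atTop_atTop.atTop_mul_const htpos).eventually_gt_atTop _
  filter_upwards [h1, h2, eventually_ge_atTop 1] with X hX1 hX2 hX3
  refine ⟨hX3, ?_⟩
  have hDb : 1 ≤ D X b := hD.1 X hX3 b
  have hDc : 1 ≤ D X c := hD.1 X hX3 c
  have hDbR : (1:ℝ) ≤ (D X b : ℝ) := by exact_mod_cast hDb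
  have hDcR : (1:ℝ) ≤ (D X c : ℝ) := by exact_mod_cast hDc
  have hXpos : (0:ℝ) < X := by exact_mod_cast hX3
  have hlog : Real.log 2 + Real.log (D X b) < Real.log (D X c) := by
    have e1 : Real.log (D X c) / X - Real.log (D X b) / X
        = (Real.log (D X c) - Real.log (D X b)) / X := by ring
    rw [e1] at hX1
    have h3 := (lt_div_iff₀ hXpos).mp hX1
    nlinarith [h3, hX2]
  have h2R : (2:ℝ) * (D X b) < D X c := by
    have hpos1 : (0:ℝ) < 2 * (D X b) := by linarith
    have hpos2 : (0:ℝ) < (D X c) := by linarith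
    have hl : Real.log (2 * (D X b)) < Real.log (D X c) := by
      rw [Real.log_mul (by norm_num) (by linarith)]
      exact hlog
    calc (2:ℝ) * (D X b) = Real.exp (Real.log (2 * (D X b))) :=
          (Real.exp_log hpos1).symm
      _ < Real.exp (Real.log (D X c)) := Real.exp_lt_exp.mpr hl
      _ = (D X c : ℝ) := Real.exp_log hpos2
  exact_mod_cast h2R.le

private lemma exists_good_delta {L : ℕ} (D : ℕ → (Fin (L + 1) → ℝ) → ℕ)
    (S : (Fin (L + 1) → ℝ) → ℝ) (hD : IsDimFun L D) (hS : RegBoltz L D S)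
    (hSI : StrictInc L S) (a : Fin (L + 1) → ℝ) (ha : ∀ i, 0 < a i) :
    ∃ δ : ℕ → ℝ, IsDelta δ ∧
      ∀ᶠ X : ℕ in atTop, 1 ≤ X ∧
        2 * D X (fun i => (1 - δ X) * a i) ≤ D X a := by
  have hηk : ∀ k : ℕ, 0 < 1 / ((k:ℝ) + 2) ∧ 1 / ((k:ℝ) + 2) < 1 := by
    intro k
    have h0 : (0:ℝ) ≤ (k:ℝ) := Nat.cast_nonneg k
    constructor
    · positivity
    · rw [div_lt_one (by linarith)]; linarith
  have hb : ∀ k : ℕ, ∀ i, 0 < (1 - 1 / ((k:ℝ) + 2)) * a i := by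
    intro k i
    have := hηk k
    exact mul_pos (by linarith [this.1, this.2]) (ha i)
  have hlt : ∀ k : ℕ, S (fun i => (1 - 1 / ((k:ℝ) + 2)) * a i) < S a := by
    intro k
    refine hSI _ _ (hb k) ha (fun i => ?_) ?_
    · have := hηk k
      nlinarith [ha i, this.1]
    · intro h
      have h0 := congrFun h 0
      have := hηk k
      nlinarith [ha 0, this.1]
  have hev : ∀ k : ℕ, ∃ M : ℕ, ∀ X ≥ M,
      1 ≤ X ∧ 2 * D X (fun i => (1 - 1 / ((k:ℝ) + 2)) * a i) ≤ D X a := by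
    intro k
    exact eventually_atTop.mp (ratio_ev D S hD hS (hb k) ha (hlt k))
  classical
  choose M hM using hev
  obtain ⟨N, hNmono, hNM⟩ : ∃ N : ℕ → ℕ, StrictMono N ∧ ∀ k, M k ≤ N k := by
    refine ⟨fun k => Nat.rec (M 0) (fun k ih => max (M (k + 1)) (ih + 1)) k, ?_, ?_⟩
    · exact strictMono_nat_of_lt_succ fun k =>
        lt_of_lt_of_le (Nat.lt_succ_self _) (le_max_right _ _)
    · intro k
      cases k with
      | zero => exact le_rfl
      | succ n => exact le_max_left _ _
  set c : ℕ → ℕ := fun X => Nat.findGreatest (fun k => N k ≤ X) X with hc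
  refine ⟨fun X => 1 / ((c X : ℝ) + 2), ⟨⟨fun X => by positivity, ?_⟩, ?_⟩⟩
  · -- tendsto 0
    have hcT : Tendsto c atTop atTop := by
      apply tendsto_atTop_atTop.2
      intro k
      refine ⟨N k, fun X hX => ?_⟩
      exact Nat.le_findGreatest (le_trans (hNmono.le_apply) hX) hX
    have h1 : Tendsto (fun n : ℕ => ((n:ℝ) + 2)⁻¹) atTop (nhds 0) :=
      (tendsto_atTop_add_const_right atTop 2 tendsto_natCast_atTop_atTop).inv_tendsto_atTop
    have := h1.comp hcT
    simpa [Function.comp_def, one_div] using this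
  · -- eventual property
    rw [eventually_atTop]
    refine ⟨N 0, fun X hX => ?_⟩
    have hP : N (c X) ≤ X := Nat.findGreatest_spec (P := fun k => N k ≤ X) (Nat.zero_le X) hX
    exact hM (c X) X (le_trans (hNM (c X)) hP)

/-- If `S̃ a > S̃ a'` with gap `s`, some `δ ∈ Δ` makes every target shell dimension
exponentially smaller than the initial one. -/
theorem stmt_3 {L : ℕ} (D : ℕ → (Fin (L + 1) → ℝ) → ℕ) (S : (Fin (L + 1) → ℝ) → ℝ)
    (hD : IsDimFun L D) (hS : RegBoltz L D S) (hSI : StrictInc L S)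
    (a a' : Fin (L + 1) → ℝ) (ha : ∀ i, 0 < a i) (ha' : ∀ i, 0 < a' i)
    (s : ℝ) (hs : s = S a - S a') (hpos : 0 < s) :
    ∃ δ : ℕ → ℝ, IsDelta δ ∧ ∀ δ' : ℕ → ℝ, IsDelta δ' →
      ∃ X₀ : ℕ, ∀ X ≥ X₀,
        1 ≤ shellDim L D a δ X ∧
        (shellDim L D a' δ' X : ℝ) <
          Real.exp (-(X : ℝ) * s / 2) * (shellDim L D a δ X : ℝ) := by
  obtain ⟨δ, hδ, hδev⟩ := exists_good_delta D S hD hS hSI a ha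
  refine ⟨δ, hδ, ?_⟩
  intro δ' hδ'
  set ε := s / 8 with hε
  have hεpos : 0 < ε := by rw [hε]; linarith
  -- choose η' by continuity
  have hg : Continuous fun t : ℝ => S (fun i => (1 + t) * a' i) :=
    hS.1.comp (continuous_pi fun i => (continuous_const.add continuous_id).mul continuous_const)
  have hlt0 : S (fun i => (1 + (0:ℝ)) * a' i) < S a' + ε := by
    have : (fun i => (1 + (0:ℝ)) * a' i) = a' := by funext i; ring
    rw [this]; linarith
  have hev0 : ∀ᶠ t : ℝ in nhds 0, S (fun i => (1 + t) * a' i) < S a' + ε :=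
    (hg.tendsto 0).eventually (eventually_lt_nhds hlt0)
  rw [Metric.eventually_nhds_iff] at hev0
  obtain ⟨r, hr, hball⟩ := hev0
  set η' := r / 2 with hη'def
  have hη' : 0 < η' := by rw [hη'def]; linarith
  have hgη : S (fun i => (1 + η') * a' i) < S a' + ε := by
    apply hball
    rw [Real.dist_eq, sub_zero, abs_of_pos hη']
    rw [hη'def]; linarith
  have hb' : ∀ i, 0 < (1 + η') * a' i := fun i => mul_pos (by linarith) (ha' i)
  -- eventual facts
  have E1 : ∀ᶠ X : ℕ in atTop, δ' X < η' :=
    hδ'.2.eventually (eventually_lt_nhds hη')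
  have E2 : ∀ᶠ X : ℕ in atTop,
      Real.log (D X (fun i => (1 + η') * a' i)) / X < S a' + ε :=
    (hS.2 _ hb').eventually (eventually_lt_nhds hgη)
  have E4 : ∀ᶠ X : ℕ in atTop, S a - ε < Real.log (D X a) / X :=
    (hS.2 a ha).eventually (eventually_gt_nhds (by linarith))
  have E5 : ∀ᶠ X : ℕ in atTop, Real.log 2 < (X : ℝ) * (s / 4) :=
    (tendsto_natCast_atTop_atTop.atTop_mul_const (by linarith : (0:ℝ) < s / 4)).eventually_gt_atTop _
  have Eall := E1.and (E2.and (hδev.and (E4.and E5)))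
  rw [eventually_atTop] at Eall
  obtain ⟨X₀, hX₀⟩ := Eall
  refine ⟨X₀, fun X hX => ?_⟩
  obtain ⟨h1, h2, ⟨hX1, h3⟩, h4, h5⟩ := hX₀ X hX
  have hXpos : (0:ℝ) < X := by exact_mod_cast hX1
  have hδpos : 0 < δ X := hδ.1 X
  have hδ'pos : 0 < δ' X := hδ'.1 X
  -- monotonicity facts
  have hmono1 : D X (fun i => (1 - δ X) * a i) ≤ D X a :=
    hD.2 X _ _ (fun i => by nlinarith [ha i])
  have hmono2 : D X a ≤ D X (fun i => (1 + δ X) * a i) :=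
    hD.2 X _ _ (fun i => by nlinarith [ha i])
  have hmono3 : D X (fun i => (1 + δ' X) * a' i) ≤ D X (fun i => (1 + η') * a' i) :=
    hD.2 X _ _ (fun i => by nlinarith [ha' i])
  have hDm1 : 1 ≤ D X (fun i => (1 - δ X) * a i) := hD.1 X hX1 _
  have hD'η1 : 1 ≤ D X (fun i => (1 + η') * a' i) := hD.1 X hX1 _
  constructor
  · -- 1 ≤ shellDim a δ X
    simp only [shellDim]
    omega
  · -- the strict inequality
    have hD'ηR : (1:ℝ) ≤ (D X (fun i => (1 + η') * a' i) : ℝ) := by exact_mod_cast hD'η1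
    -- upper bound for the target shell
    have stepA : (shellDim L D a' δ' X : ℝ) ≤ (D X (fun i => (1 + η') * a' i) : ℝ) := by
      have : shellDim L D a' δ' X ≤ D X (fun i => (1 + η') * a' i) :=
        le_trans (Nat.sub_le _ _) hmono3
      exact_mod_cast this
    have stepB : (D X (fun i => (1 + η') * a' i) : ℝ) < Real.exp ((S a' + ε) * X) := by
      have hlog : Real.log (D X (fun i => (1 + η') * a' i)) < (S a' + ε) * X :=
        (div_lt_iff₀ hXpos).mp h2
      calc (D X (fun i => (1 + η') * a' i) : ℝ)
          = Real.exp (Real.log (D X (fun i => (1 + η') * a' i))) :=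
            (Real.exp_log (by linarith)).symm
        _ < Real.exp ((S a' + ε) * X) := Real.exp_lt_exp.mpr hlog
    -- lower bound for the initial shell
    have hDa_lb : Real.exp ((S a - ε) * X) ≤ (D X a : ℝ) := by
      have hDa1 : 1 ≤ D X a := hD.1 X hX1 a
      have hDaR : (0:ℝ) < (D X a : ℝ) := by exact_mod_cast hDa1
      have hlog : (S a - ε) * X ≤ Real.log (D X a) := ((lt_div_iff₀ hXpos).mp h4).le
      calc Real.exp ((S a - ε) * X) ≤ Real.exp (Real.log (D X a)) :=
            Real.exp_le_exp.mpr hlog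
        _ = (D X a : ℝ) := Real.exp_log hDaR
    have hshell_lb : (D X a : ℝ) / 2 ≤ (shellDim L D a δ X : ℝ) := by
      have hsub : shellDim L D a δ X =
          D X (fun i => (1 + δ X) * a i) - D X (fun i => (1 - δ X) * a i) := rfl
      have hle : D X (fun i => (1 - δ X) * a i) ≤ D X (fun i => (1 + δ X) * a i) :=
        le_trans hmono1 hmono2
      rw [hsub, Nat.cast_sub hle]
      have c1 : (2:ℝ) * (D X (fun i => (1 - δ X) * a i) : ℝ) ≤ (D X a : ℝ) := by
        exact_mod_cast h3
      have c2 : (D X a : ℝ) ≤ (D X (fun i => (1 + δ X) * a i) : ℝ) := by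
        exact_mod_cast hmono2
      linarith
    have stepC : Real.exp ((S a' + ε) * X) ≤
        Real.exp (-(X : ℝ) * s / 2) * ((D X a : ℝ) / 2) := by
      have key : (S a' + ε) * X + Real.log 2 ≤ -(X : ℝ) * s / 2 + (S a - ε) * X := by
        have hSa : S a = S a' + s := by linarith
        rw [hSa, hε]
        nlinarith [h5]
      have e2 : Real.exp ((S a' + ε) * X) * 2 ≤
          Real.exp (-(X : ℝ) * s / 2 + (S a - ε) * X) := by
        have h2e : Real.exp ((S a' + ε) * X) * 2
            = Real.exp ((S a' + ε) * X + Real.log 2) := by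
          rw [Real.exp_add, Real.exp_log two_pos]
        rw [h2e]
        exact Real.exp_le_exp.mpr key
      rw [Real.exp_add] at e2
      have e3 : Real.exp (-(X : ℝ) * s / 2) * Real.exp ((S a - ε) * X) ≤
          Real.exp (-(X : ℝ) * s / 2) * (D X a : ℝ) :=
        mul_le_mul_of_nonneg_left hDa_lb (Real.exp_pos _).le
      linarith
    have stepD : Real.exp (-(X : ℝ) * s / 2) * ((D X a : ℝ) / 2) ≤
        Real.exp (-(X : ℝ) * s / 2) * (shellDim L D a δ X : ℝ) :=
      mul_le_mul_of_nonneg_left hshell_lb (Real.exp_pos _).le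
    calc (shellDim L D a' δ' X : ℝ) ≤ _ := stepA
      _ < Real.exp ((S a' + ε) * X) := stepB
      _ ≤ Real.exp (-(X : ℝ) * s / 2) * ((D X a : ℝ) / 2) := stepC
      _ ≤ _ := stepD
end

section
/- Let D be a dimension function satisfying the regularized Boltzmann entropy hypothesis with S̃ strictly increasing in each coordinate, and let a, a' ∈ ℝ^{L+1} with a > 0 and a' > 0. If S̃ a > S̃ a', then there exists δ ∈ Δ such that for every δ' ∈ Δ the following holds for all sufficiently large X: D_{a,δ}(X) ≥ 1, and if D_{a',δ'}(X) ≥ 1, then every summable q : ℕ → ℝ with q i ≥ 0 for all i, Σ_i q i = 1, and q i ≤ 1/D_{a,δ}(X) for all i satisfies T(q, D_{a',δ'}(X)) ≥ 1/3. (This is the impossibility half of Theorem 1: any output of a unital channel applied to π^{(X)}_{a,δ_X} has eigenvalue distribution q with max q ≤ 1/D_{a,δ}(X), hence stays at trace distance at least 1/3 from π^{(X)}_{a',δ'_X}.) -/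
open Filter Topology

private lemma aux_log_ratio {f g : ℕ → ℕ} {u v : ℝ} (huv : u < v)
    (hf1 : ∀ X : ℕ, 1 ≤ X → 1 ≤ f X) (hg1 : ∀ X : ℕ, 1 ≤ X → 1 ≤ g X)
    (hf : Tendsto (fun X : ℕ => Real.log (f X) / X) atTop (nhds u))
    (hg : Tendsto (fun X : ℕ => Real.log (g X) / X) atTop (nhds v))
    (c : ℕ) (hc : 1 ≤ c) :
    ∀ᶠ X in atTop, c * f X ≤ g X := by
  have hhalf : (0:ℝ) < (v - u) / 2 := by linarith
  have hsub : Tendsto (fun X : ℕ => Real.log (g X) / X - Real.log (f X) / X)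
      atTop (nhds (v - u)) := hg.sub hf
  have hgap : ∀ᶠ X : ℕ in atTop,
      (v - u) / 2 < Real.log (g X) / X - Real.log (f X) / X :=
    hsub.eventually (eventually_gt_nhds (by linarith))
  have hXbig : Tendsto (fun X : ℕ => (X : ℝ) * ((v - u) / 2)) atTop atTop :=
    tendsto_natCast_atTop_atTop.atTop_mul_const hhalf
  have hlogc : ∀ᶠ X : ℕ in atTop, Real.log c ≤ (X : ℝ) * ((v - u) / 2) :=
    hXbig.eventually_ge_atTop _
  filter_upwards [hgap, hlogc, eventually_ge_atTop 1] with X hgapX hlogcX hX1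
  have hfX := hf1 X hX1
  have hgX := hg1 X hX1
  have hXpos : (0:ℝ) < X := by exact_mod_cast hX1
  have hfpos : (0:ℝ) < f X := by exact_mod_cast hfX
  have hgpos : (0:ℝ) < g X := by exact_mod_cast hgX
  have hcpos : (0:ℝ) < c := by exact_mod_cast hc
  have key : Real.log ((c : ℝ) * f X) ≤ Real.log (g X) := by
    rw [Real.log_mul (ne_of_gt hcpos) (ne_of_gt hfpos)]
    have h1 : Real.log (g X) - Real.log (f X)
        = (Real.log (g X) / X - Real.log (f X) / X) * X := by
      field_simp
    have h2 : ((v - u) / 2) * X ≤ (Real.log (g X) / X - Real.log (f X) / X) * X :=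
      mul_le_mul_of_nonneg_right hgapX.le hXpos.le
    rw [mul_comm] at hlogcX
    linarith
  have : (c : ℝ) * f X ≤ (g X : ℝ) :=
    (Real.log_le_log_iff (by positivity) hgpos).mp key
  exact_mod_cast this

private def Mseq (N : ℕ → ℕ) : ℕ → ℕ
  | 0 => max (N 0) 1
  | k + 1 => max (N (k + 1)) (Mseq N k + 1)

private lemma Mseq_ge_N (N : ℕ → ℕ) : ∀ k, N k ≤ Mseq N k
  | 0 => le_max_left _ _
  | k + 1 => le_max_left _ _

private lemma Mseq_ge (N : ℕ → ℕ) : ∀ k, k + 1 ≤ Mseq N k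
  | 0 => le_max_right _ _
  | k + 1 => le_trans (by have := Mseq_ge N k; omega) (le_max_right _ _)

/-- Impossibility half of Theorem 1: if `S̃ a > S̃ a'`, some `δ ∈ Δ` makes every
distribution majorized by the initial microcanonical state stay at total variation
distance at least `1/3` from the target microcanonical distribution. -/
theorem stmt_4 {L : ℕ} (D : ℕ → (Fin (L + 1) → ℝ) → ℕ) (S : (Fin (L + 1) → ℝ) → ℝ)
    (hD : IsDimFun L D) (hS : RegBoltz L D S) (hSI : StrictInc L S)
    (a a' : Fin (L + 1) → ℝ) (ha : ∀ i, 0 < a i) (ha' : ∀ i, 0 < a' i)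
    (hgt : S a' < S a) :
    ∃ δ : ℕ → ℝ, IsDelta δ ∧ ∀ δ' : ℕ → ℝ, IsDelta δ' →
      ∃ X₀ : ℕ, ∀ X ≥ X₀,
        1 ≤ shellDim L D a δ X ∧
        (1 ≤ shellDim L D a' δ' X →
          ∀ q : ℕ → ℝ, Summable q → (∀ i, 0 ≤ q i) → (∑' i, q i) = 1 →
            (∀ i, q i ≤ 1 / (shellDim L D a δ X : ℝ)) →
            (1 : ℝ) / 3 ≤ TVu q (shellDim L D a' δ' X)) := by
  classical
  obtain ⟨hD1, hD2⟩ := hD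
  obtain ⟨hScont, hSlim⟩ := hS
  -- choose ε > 0 with S ((1+ε)•a') < S a
  have hfc : Continuous (fun t : ℝ => S (fun i => (1 + t) * a' i)) :=
    hScont.comp (continuous_pi fun i =>
      (continuous_const.add continuous_id).mul continuous_const)
  have h0 : (fun i => (1 + (0:ℝ)) * a' i) = a' := by funext i; ring
  have hev : ∀ᶠ t in nhds (0:ℝ), S (fun i => (1 + t) * a' i) < S a := by
    have := hfc.continuousAt (x := 0)
    rw [ContinuousAt, h0] at this
    exact this.eventually (eventually_lt_nhds hgt)
  obtain ⟨r, hr, hball⟩ := Metric.eventually_nhds_iff.mp hev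
  set ε := r / 2 with hεdef
  have hεpos : 0 < ε := by positivity
  have hεlt : S (fun i => (1 + ε) * a' i) < S a := by
    apply hball
    simp only [Real.dist_eq, sub_zero, abs_of_pos hεpos]
    rw [hεdef]; linarith
  -- per-k eventual shell bound
  have hk : ∀ k : ℕ, ∀ᶠ X in atTop,
      2 * D X (fun i => (1 - 1 / ((k:ℝ) + 2)) * a i) ≤ D X a := by
    intro k
    have hk2 : (0:ℝ) < (k:ℝ) + 2 := by positivity
    have hek0 : (0:ℝ) < 1 / ((k:ℝ) + 2) := by positivity
    have hek1 : 1 / ((k:ℝ) + 2) < 1 := by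
      rw [div_lt_one hk2]; linarith [Nat.cast_nonneg (α := ℝ) k]
    have hbpos : ∀ i, 0 < (1 - 1 / ((k:ℝ) + 2)) * a i :=
      fun i => mul_pos (by linarith) (ha i)
    have hlt : S (fun i => (1 - 1 / ((k:ℝ) + 2)) * a i) < S a := by
      apply hSI _ _ hbpos ha
      · intro i; nlinarith [ha i]
      · intro hcontra
        have h00 := congrFun hcontra 0
        nlinarith [ha 0]
    exact aux_log_ratio hlt (fun X hX => hD1 X hX _) (fun X hX => hD1 X hX _)
      (hSlim _ hbpos) (hSlim a ha) 2 (by norm_num)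
  choose N hN using fun k => eventually_atTop.mp (hk k)
  -- the diagonal sequence δ
  set K : ℕ → ℕ := fun X => Nat.findGreatest (fun k => Mseq N k ≤ X) X with hKdef
  refine ⟨fun X => 1 / ((K X : ℝ) + 2), ⟨fun X => by positivity, ?_⟩, ?_⟩
  · -- tendsto 0
    have hKtop : Tendsto K atTop atTop := by
      refine tendsto_atTop_atTop.mpr fun b => ⟨Mseq N b, fun X hX => ?_⟩
      exact Nat.le_findGreatest (le_trans (by have := Mseq_ge N b; omega) hX) hX
    have h2 : Tendsto (fun X => ((K X : ℝ) + 2)) atTop atTop :=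
      tendsto_atTop_add_const_right atTop 2 (tendsto_natCast_atTop_atTop.comp hKtop)
    refine (h2.inv_tendsto_atTop).congr (fun X => ?_)
    simp [one_div]
  · -- main claim
    intro δ' hδ'
    have hδkey : ∀ X, Mseq N 0 ≤ X →
        2 * D X (fun i => (1 - 1 / ((K X : ℝ) + 2)) * a i) ≤ D X a := by
      intro X hX
      have hP : Mseq N (K X) ≤ X :=
        Nat.findGreatest_spec (P := fun k => Mseq N k ≤ X) (Nat.zero_le X) hX
      exact hN (K X) X (le_trans (Mseq_ge_N N (K X)) hP)
    have hb'pos : ∀ i, 0 < (1 + ε) * a' i := fun i => mul_pos (by linarith) (ha' i)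
    have h3ev : ∀ᶠ X in atTop, 3 * D X (fun i => (1 + ε) * a' i) ≤ D X a :=
      aux_log_ratio hεlt (fun X hX => hD1 X hX _) (fun X hX => hD1 X hX _)
        (hSlim _ hb'pos) (hSlim a ha) 3 (by norm_num)
    have hδ'ev : ∀ᶠ X in atTop, δ' X < ε := hδ'.2.eventually (eventually_lt_nhds hεpos)
    obtain ⟨X₁, hX₁⟩ := eventually_atTop.mp h3ev
    obtain ⟨X₂, hX₂⟩ := eventually_atTop.mp hδ'ev
    refine ⟨max (max X₁ X₂) (max (Mseq N 0) 1), fun X hX => ?_⟩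
    have hXM : Mseq N 0 ≤ X := le_trans (le_trans (le_max_left _ _) (le_max_right _ _)) hX
    have hX1 : 1 ≤ X := le_trans (le_trans (le_max_right _ _) (le_max_right _ _)) hX
    have hXX₁ : X₁ ≤ X := le_trans (le_trans (le_max_left _ _) (le_max_left _ _)) hX
    have hXX₂ : X₂ ≤ X := le_trans (le_trans (le_max_right _ _) (le_max_left _ _)) hX
    set δX : ℝ := 1 / ((K X : ℝ) + 2) with hδXdef
    have hδXpos : 0 < δX := by rw [hδXdef]; positivity
    set Ds := D X (fun i => (1 - δX) * a i) with hDs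
    set Db := D X (fun i => (1 + δX) * a i) with hDb
    set DA := D X a with hDA
    have hss : 2 * Ds ≤ DA := hδkey X hXM
    have hDAb : DA ≤ Db := hD2 X a _ (fun i => by nlinarith [ha i])
    have hDA1 : 1 ≤ DA := hD1 X hX1 a
    have hshell : shellDim L D a (fun X => 1 / ((K X : ℝ) + 2)) X = Db - Ds := rfl
    constructor
    · rw [hshell]; omega
    · intro hd1 q hqsum hqnn hqtot hqle
      set d := shellDim L D a' δ' X with hd
      set Ds' := D X (fun i => (1 - δ' X) * a' i) with hDs'
      set Db' := D X (fun i => (1 + δ' X) * a' i) with hDb'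
      have hdval : d = Db' - Ds' := rfl
      have hδ'X : δ' X < ε := hX₂ X hXX₂
      have hDb'p : Db' ≤ D X (fun i => (1 + ε) * a' i) :=
        hD2 X _ _ (fun i => by nlinarith [ha' i])
      have h3 : 3 * D X (fun i => (1 + ε) * a' i) ≤ DA := hX₁ X hXX₁
      have h3d : 3 * d ≤ DA := by omega
      set DS := Db - Ds with hDSdef
      have hDS1 : 1 ≤ DS := by omega
      have h32 : 3 * d ≤ 2 * DS := by omega
      have hDSpos : (0:ℝ) < DS := by exact_mod_cast hDS1
      have hdpos : (0:ℝ) < d := by exact_mod_cast hd1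
      set s := ∑ i ∈ Finset.range d, q i with hs
      have hsub : s ≤ (d : ℝ) * (1 / (DS : ℝ)) := by
        rw [hs]
        calc ∑ i ∈ Finset.range d, q i
            ≤ ∑ i ∈ Finset.range d, (1 / (DS : ℝ)) := by
              refine Finset.sum_le_sum fun i _ => ?_
              have := hqle i
              rwa [hshell] at this
          _ = (d : ℝ) * (1 / (DS : ℝ)) := by
              rw [Finset.sum_const, Finset.card_range, nsmul_eq_mul]
      have h32' : 3 * (d : ℝ) ≤ 2 * (DS : ℝ) := by exact_mod_cast h32
      have hs23 : s ≤ 2 / 3 := by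
        have : (d : ℝ) * (1 / (DS : ℝ)) ≤ 2 / 3 := by
          rw [mul_one_div, div_le_div_iff₀ hDSpos (by norm_num)]
          linarith
        linarith
      have htail : ∑' i, q (i + d) = 1 - s := by
        have := Summable.sum_add_tsum_nat_add d hqsum
        rw [hqtot] at this
        linarith [this]
      have hA : 1 - s ≤ ∑ i ∈ Finset.range d, |q i - 1 / (d : ℝ)| := by
        have h1 : ∑ i ∈ Finset.range d, (1 / (d : ℝ) - q i)
            ≤ ∑ i ∈ Finset.range d, |q i - 1 / (d : ℝ)| := by
          refine Finset.sum_le_sum fun i _ => ?_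
          rw [abs_sub_comm]
          exact le_abs_self _
        have h2 : ∑ i ∈ Finset.range d, (1 / (d : ℝ) - q i) = 1 - s := by
          rw [Finset.sum_sub_distrib, Finset.sum_const, Finset.card_range, nsmul_eq_mul,
            mul_one_div, div_self (ne_of_gt hdpos), ← hs]
        linarith
      unfold TVu
      rw [htail]
      linarith
end

section
/- Let D be a dimension function and let a, a' ∈ ℝ^{L+1} with a > 0 and a' > 0. If S̄(a) < S̲(a'), then for every δ ∈ Δ there exists δ' ∈ Δ such that D_{a,δ}(X) ≤ D_{a',δ'}(X) for all sufficiently large X. (This is relation (14) of Theorem 2 of the paper: the dimension-dominance condition is exactly the majorization of microcanonical states realized by a unital channel, i.e., the possibility of the macroscopic adiabatic transformation a ≺_ad a'.) -/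
open Filter Topology

lemma natlog_le_of_log_lt {m n : ℕ} (h : Real.log m < Real.log n) : m ≤ n := by
  by_contra hc
  push_neg at hc
  have hle : Real.log n ≤ Real.log m := by
    rcases Nat.eq_zero_or_pos n with h0 | hp
    · subst h0
      simpa using Real.log_natCast_nonneg m
    · apply Real.log_le_log (by exact_mod_cast hp)
      exact_mod_cast hc.le
  linarith

/-- Relation (14) of Theorem 2: if `S̄(a) < S̲(a')` then the shell dimension of `a` is
eventually dominated by one of `a'`. -/
theorem stmt_5 {L : ℕ} (D : ℕ → (Fin (L + 1) → ℝ) → ℕ)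
    (hD : IsDimFun L D)
    (a a' : Fin (L + 1) → ℝ) (ha : ∀ i, 0 < a i) (ha' : ∀ i, 0 < a' i)
    (hlt : SbarSup L D a < SbarInf L D a') :
    ∀ δ : ℕ → ℝ, IsDelta δ → ∃ δ' : ℕ → ℝ, IsDelta δ' ∧
      ∃ X₀ : ℕ, ∀ X ≥ X₀, shellDim L D a δ X ≤ shellDim L D a' δ' X := by
  intro δ hδ
  have h1 : Filter.limsup
      (fun X : ℕ => ((Real.log (shellDim L D a δ X) / X : ℝ) : EReal)) atTop ≤ SbarSup L D a :=
    le_iSup (fun d : {δ : ℕ → ℝ // IsDelta δ} =>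
      Filter.limsup (fun X : ℕ => ((Real.log (shellDim L D a d.1 X) / X : ℝ) : EReal)) atTop)
      ⟨δ, hδ⟩
  rw [SbarInf, lt_iSup_iff] at hlt
  obtain ⟨⟨δ', hδ'⟩, h2⟩ := hlt
  refine ⟨δ', hδ', ?_⟩
  have hls := lt_of_le_of_lt h1 h2
  obtain ⟨c, hc1, hc2⟩ := exists_between hls
  have hf := Filter.eventually_lt_of_limsup_lt hc1
  have hg := Filter.eventually_lt_of_lt_liminf hc2
  have hX1 : ∀ᶠ X : ℕ in atTop, 1 ≤ X := Filter.eventually_ge_atTop 1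
  have hall := (hf.and hg).and hX1
  rw [Filter.eventually_atTop] at hall
  obtain ⟨X₀, hX₀⟩ := hall
  refine ⟨X₀, fun X hX => ?_⟩
  obtain ⟨⟨ha1, ha2⟩, ha3⟩ := hX₀ X hX
  have hE : ((Real.log (shellDim L D a δ X) / X : ℝ) : EReal)
      < ((Real.log (shellDim L D a' δ' X) / X : ℝ) : EReal) := ha1.trans ha2
  have hr : Real.log (shellDim L D a δ X) / X < Real.log (shellDim L D a' δ' X) / X :=
    EReal.coe_lt_coe_iff.mp hE
  have hXpos : (0:ℝ) < X := by exact_mod_cast ha3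
  have hlog : Real.log (shellDim L D a δ X) < Real.log (shellDim L D a' δ' X) :=
    (div_lt_div_iff_of_pos_right hXpos).mp hr
  exact natlog_le_of_log_lt hlog
end

section
/- Let D be a dimension function and let a, a' ∈ ℝ^{L+1} with a > 0 and a' > 0. If S̲(a) > S̄(a'), then there exists δ ∈ Δ such that for every δ' ∈ Δ the following holds for all sufficiently large X: D_{a,δ}(X) ≥ 1, and if D_{a',δ'}(X) ≥ 1, then every summable q : ℕ → ℝ with q i ≥ 0 for all i, Σ_i q i = 1, and q i ≤ 1/D_{a,δ}(X) for all i satisfies T(q, D_{a',δ'}(X)) ≥ 1/3. (This is the impossibility direction, relation (15), of Theorem 2 of the paper.) -/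
open Filter Topology

/-- Relation (15) of Theorem 2 (impossibility direction). -/
theorem stmt_6 {L : ℕ} (D : ℕ → (Fin (L + 1) → ℝ) → ℕ)
    (hD : IsDimFun L D)
    (a a' : Fin (L + 1) → ℝ) (ha : ∀ i, 0 < a i) (ha' : ∀ i, 0 < a' i)
    (hgt : SbarSup L D a' < SbarInf L D a) :
    ∃ δ : ℕ → ℝ, IsDelta δ ∧ ∀ δ' : ℕ → ℝ, IsDelta δ' →
      ∃ X₀ : ℕ, ∀ X ≥ X₀,
        1 ≤ shellDim L D a δ X ∧
        (1 ≤ shellDim L D a' δ' X →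
          ∀ q : ℕ → ℝ, Summable q → (∀ i, 0 ≤ q i) → (∑' i, q i) = 1 →
            (∀ i, q i ≤ 1 / (shellDim L D a δ X : ℝ)) →
            (1 : ℝ) / 3 ≤ TVu q (shellDim L D a' δ' X)) := by
  -- every limsup in sight is nonnegative
  have hnn : ∀ (b : Fin (L+1) → ℝ) (δ' : {δ : ℕ → ℝ // IsDelta δ}),
      (0:EReal) ≤ Filter.limsup
        (fun X : ℕ => ((Real.log (shellDim L D b δ'.1 X) / X : ℝ) : EReal)) atTop := by
    intro b δ'
    refine Filter.le_limsup_of_frequently_le (Filter.Frequently.of_forall fun X => ?_)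
    have h0 : (0:ℝ) ≤ Real.log (shellDim L D b δ'.1 X) / X := by
      apply div_nonneg _ (Nat.cast_nonneg _)
      rcases Nat.eq_zero_or_pos (shellDim L D b δ'.1 X) with h | h
      · simp [h]
      · exact Real.log_nonneg (by exact_mod_cast h)
    exact_mod_cast h0
  have hδ₀ : IsDelta (fun X : ℕ => 1 / (X + 1 : ℝ)) := by
    constructor
    · intro X; positivity
    · exact tendsto_one_div_add_atTop_nhds_zero_nat
  have hS0 : (0:EReal) ≤ SbarSup L D a' :=
    le_trans (hnn a' ⟨_, hδ₀⟩)
      (le_iSup (fun d : {δ : ℕ → ℝ // IsDelta δ} => Filter.limsup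
        (fun X : ℕ => ((Real.log (shellDim L D a' d.1 X) / X : ℝ) : EReal)) atTop) ⟨_, hδ₀⟩)
  rw [SbarInf, lt_iSup_iff] at hgt
  obtain ⟨⟨δ, hδ⟩, hlt⟩ := hgt
  obtain ⟨u, hu1, hu2⟩ := EReal.exists_between_coe_real hlt
  obtain ⟨v, hv1, hv2⟩ := EReal.exists_between_coe_real hu2
  have hu0 : (0:ℝ) < u := by exact_mod_cast lt_of_le_of_lt hS0 hu1
  have huv : u < v := by exact_mod_cast hv1
  refine ⟨δ, hδ, fun δ' hδ' => ?_⟩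
  have hlimsup : Filter.limsup
      (fun X : ℕ => ((Real.log (shellDim L D a' δ' X) / X : ℝ) : EReal)) atTop < (u:EReal) :=
    lt_of_le_of_lt (le_iSup (fun d : {δ : ℕ → ℝ // IsDelta δ} => Filter.limsup
      (fun X : ℕ => ((Real.log (shellDim L D a' d.1 X) / X : ℝ) : EReal)) atTop) ⟨δ', hδ'⟩) hu1
  have h1 : ∀ᶠ X : ℕ in atTop,
      ((Real.log (shellDim L D a' δ' X) / X : ℝ) : EReal) < (u:EReal) :=
    Filter.eventually_lt_of_limsup_lt hlimsup
  have h2 : ∀ᶠ X : ℕ in atTop,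
      (v:EReal) < ((Real.log (shellDim L D a δ X) / X : ℝ) : EReal) :=
    Filter.eventually_lt_of_lt_liminf hv2
  have h3 : ∀ᶠ X : ℕ in atTop, Real.exp ((u - v) * X) ≤ 2/3 := by
    have htend : Tendsto (fun X : ℕ => Real.exp ((u - v) * X)) atTop (nhds 0) := by
      apply Real.tendsto_exp_atBot.comp
      have h := (tendsto_natCast_atTop_atTop (R := ℝ)).const_mul_atTop (by linarith : (0:ℝ) < v - u)
      have := tendsto_neg_atTop_atBot.comp h
      refine this.congr fun X => by simp only [Function.comp]; ring
    exact htend.eventually (Filter.Tendsto.eventually_le_const (by norm_num) tendsto_id)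
  obtain ⟨X₀, hX₀⟩ := Filter.eventually_atTop.mp
    (((h1.and h2).and (h3.and (Filter.eventually_ge_atTop 1))))
  refine ⟨X₀, fun X hX => ?_⟩
  obtain ⟨⟨hd', hN'⟩, h3X, hX1⟩ := hX₀ X hX
  set N := shellDim L D a δ X with hNdef
  set d := shellDim L D a' δ' X with hddef
  have hXpos : (0:ℝ) < X := by exact_mod_cast hX1
  have hvN : v * X < Real.log N := (lt_div_iff₀ hXpos).mp (by exact_mod_cast hN')
  have hvX : (0:ℝ) < v * X := mul_pos (lt_trans hu0 huv) hXpos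
  have hN1 : 1 ≤ N := by
    by_contra h
    push_neg at h
    interval_cases N
    simp only [Nat.cast_zero, Real.log_zero] at hvN
    linarith
  have hNexp : Real.exp (v * X) < (N:ℝ) :=
    (Real.lt_log_iff_exp_lt (by exact_mod_cast hN1 : (0:ℝ) < N)).mp hvN
  refine ⟨hN1, fun hd1 q hq hqnn hqsum hqle => ?_⟩
  have hdu : Real.log d < u * X := (div_lt_iff₀ hXpos).mp (by exact_mod_cast hd')
  have hdexp : (d:ℝ) < Real.exp (u * X) :=
    (Real.log_lt_iff_lt_exp (by exact_mod_cast hd1 : (0:ℝ) < d)).mp hdu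
  have hdN : (d:ℝ) / N ≤ 2/3 := by
    have h : (d:ℝ) / N ≤ Real.exp (u * X) / Real.exp (v * X) :=
      div_le_div₀ (Real.exp_pos _).le hdexp.le (Real.exp_pos _) hNexp.le
    have heq : Real.exp (u * X) / Real.exp (v * X) = Real.exp ((u - v) * X) := by
      rw [← Real.exp_sub]; ring_nf
    rw [heq] at h
    linarith
  set s := ∑ i ∈ Finset.range d, q i with hsdef
  have hs_le : s ≤ (d:ℝ) / N := by
    calc s ≤ ∑ _i ∈ Finset.range d, 1 / (N:ℝ) :=
          Finset.sum_le_sum fun i _ => hqle i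
      _ = (d:ℝ) / N := by
          rw [Finset.sum_const, Finset.card_range]; simp [div_eq_mul_inv]
  have htsum : ∑' i, q (i + d) = 1 - s := by
    have := Summable.sum_add_tsum_nat_add d hq
    rw [hqsum] at this
    linarith
  have habs : 1 - s ≤ ∑ i ∈ Finset.range d, |q i - 1 / (d:ℝ)| := by
    have h : ∑ i ∈ Finset.range d, (1 / (d:ℝ) - q i)
        ≤ ∑ i ∈ Finset.range d, |q i - 1 / (d:ℝ)| :=
      Finset.sum_le_sum fun i _ => by rw [abs_sub_comm]; exact le_abs_self _
    have hd0 : (d:ℝ) ≠ 0 := by positivity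
    have heq : ∑ i ∈ Finset.range d, (1 / (d:ℝ) - q i) = 1 - s := by
      rw [Finset.sum_sub_distrib, Finset.sum_const, Finset.card_range]
      rw [nsmul_eq_mul, mul_one_div_cancel hd0, hsdef]
    linarith
  rw [TVu, htsum]
  linarith
end

section
/- Let f, g : ℕ → ℕ satisfy f X ≥ 1 and g X ≥ 1 for all X ≥ 1, and suppose s := liminf_{X→∞} (1/X)·log(f X) − limsup_{X→∞} (1/X)·log(g X) > 0. Then for all sufficiently large X, every summable q : ℕ → ℝ with q i ≥ 0 for all i, Σ_i q i = 1, and q i ≤ 1/(f X) for all i satisfies T(q, g X) ≥ (1/2)·(1 − e^{−X·s/2}). (This is the core of the impossibility half of Lemma 4 in the paper, with f X the initial and g X the target microcanonical dimension.) -/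
open Filter Topology

/-- Core of the impossibility half of Lemma 4: if the initial dimension rate exceeds
the target one by `s > 0`, the trace-distance bound `(1/2)(1 - e^{-Xs/2})` holds. -/
theorem stmt_8 (f g : ℕ → ℕ)
    (hf : ∀ X : ℕ, 1 ≤ X → 1 ≤ f X) (hg : ∀ X : ℕ, 1 ≤ X → 1 ≤ g X)
    (s : ℝ)
    (hs : Filter.liminf (fun X : ℕ => ((Real.log (f X) / X : ℝ) : EReal)) atTop -
          Filter.limsup (fun X : ℕ => ((Real.log (g X) / X : ℝ) : EReal)) atTop = (s : EReal))
    (hpos : 0 < s) :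
    ∃ X₀ : ℕ, ∀ X ≥ X₀,
      ∀ q : ℕ → ℝ, Summable q → (∀ i, 0 ≤ q i) → (∑' i, q i) = 1 →
        (∀ i, q i ≤ 1 / (f X : ℝ)) →
        (1 / 2 : ℝ) * (1 - Real.exp (-(X : ℝ) * s / 2)) ≤ TVu q (g X) := by
  set A := Filter.liminf (fun X : ℕ => ((Real.log (f X) / X : ℝ) : EReal)) atTop with hA
  set B := Filter.limsup (fun X : ℕ => ((Real.log (g X) / X : ℝ) : EReal)) atTop with hB
  have hgev : ∀ᶠ X : ℕ in atTop, (0:EReal) ≤ ((Real.log (g X) / X : ℝ) : EReal) := by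
    filter_upwards [eventually_ge_atTop 1] with X hX
    have h1 : (1:ℝ) ≤ (g X : ℝ) := by exact_mod_cast hg X hX
    have : (0:ℝ) ≤ Real.log (g X) / X := div_nonneg (Real.log_nonneg h1) (by positivity)
    exact_mod_cast this
  have hB0 : (0:EReal) ≤ B := le_limsup_of_frequently_le hgev.frequently
  have hBtop : B ≠ ⊤ := by
    intro h
    rw [h, EReal.sub_top] at hs
    exact absurd hs.symm (EReal.coe_ne_bot s)
  have hBbot : B ≠ ⊥ := fun h => by simp [h] at hB0
  obtain ⟨b, hb⟩ : ∃ b : ℝ, B = (b:EReal) := ⟨B.toReal, (EReal.coe_toReal hBtop hBbot).symm⟩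
  rw [hb] at hs
  have hAtop : A ≠ ⊤ := by
    intro h; rw [h, EReal.top_sub_coe] at hs; exact absurd hs.symm (EReal.coe_ne_top s)
  have hAbot : A ≠ ⊥ := by
    intro h; rw [h, EReal.bot_sub] at hs; exact absurd hs.symm (EReal.coe_ne_bot s)
  obtain ⟨a, ha⟩ : ∃ a : ℝ, A = (a:EReal) := ⟨A.toReal, (EReal.coe_toReal hAtop hAbot).symm⟩
  rw [ha, ← EReal.coe_sub] at hs
  have hab : a - b = s := EReal.coe_injective hs
  have h1 : ∀ᶠ X : ℕ in atTop, ((a - s/4 : ℝ):EReal) < ((Real.log (f X) / X : ℝ):EReal) := by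
    apply Filter.eventually_lt_of_lt_liminf
    · rw [← hA, ha]
      exact_mod_cast (by linarith : a - s/4 < a)
    · exact Filter.isBounded_ge_of_bot
  have h2 : ∀ᶠ X : ℕ in atTop, ((Real.log (g X) / X : ℝ):EReal) < ((b + s/4 : ℝ):EReal) := by
    apply Filter.eventually_lt_of_limsup_lt
    · rw [← hB, hb]
      exact_mod_cast (by linarith : b < b + s/4)
    · exact Filter.isBounded_le_of_top
  obtain ⟨X₀, hX₀⟩ := Filter.eventually_atTop.mp ((h1.and h2).and (eventually_ge_atTop 1))
  refine ⟨X₀, fun X hX q hsum hq0 hq1 hqf => ?_⟩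
  obtain ⟨⟨hfa, hgb⟩, hX1⟩ := hX₀ X hX
  have hfa' : a - s/4 < Real.log (f X) / X := by exact_mod_cast hfa
  have hgb' : Real.log (g X) / X < b + s/4 := by exact_mod_cast hgb
  have hXpos : (0:ℝ) < X := by exact_mod_cast hX1
  have hf1 : (1:ℝ) ≤ (f X:ℝ) := by exact_mod_cast hf X hX1
  have hg1 : (1:ℝ) ≤ (g X:ℝ) := by exact_mod_cast hg X hX1
  have e1 : (a - s/4) * X < Real.log (f X) := (lt_div_iff₀ hXpos).mp hfa'
  have e2 : Real.log (g X) < (b + s/4) * X := (div_lt_iff₀ hXpos).mp hgb'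
  have e3 : (b + s/4) * X - (a - s/4) * X = -(X:ℝ) * s / 2 := by
    rw [show b = a - s by linarith]; ring
  have hlog : Real.log (g X) - Real.log (f X) < -(X:ℝ) * s / 2 := by linarith
  have hgf : (g X : ℝ) / (f X : ℝ) < Real.exp (-(X:ℝ) * s / 2) := by
    have hg0 : (0:ℝ) < g X := by linarith
    have hf0 : (0:ℝ) < f X := by linarith
    have hlog2 : Real.log ((g X:ℝ) / f X) < -(X:ℝ) * s / 2 := by
      rw [Real.log_div (ne_of_gt hg0) (ne_of_gt hf0)]; exact hlog
    calc (g X:ℝ)/f X = Real.exp (Real.log ((g X:ℝ)/f X)) := (Real.exp_log (by positivity)).symm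
      _ < _ := Real.exp_lt_exp.mpr hlog2
  set d := g X with hd
  have hd1 : 1 ≤ d := hg X hX1
  have hdR : (0:ℝ) < (d:ℝ) := by exact_mod_cast hd1
  have hsum1 : ∑ i ∈ Finset.range d, q i ≤ (d:ℝ) / f X := by
    calc ∑ i ∈ Finset.range d, q i ≤ ∑ _i ∈ Finset.range d, (1 / (f X:ℝ)) :=
        Finset.sum_le_sum (fun i _ => hqf i)
      _ = d * (1/(f X:ℝ)) := by simp [Finset.sum_const, mul_comm]
      _ = (d:ℝ)/f X := by ring
  have hS1 : (1:ℝ) - (d:ℝ)/f X ≤ ∑ i ∈ Finset.range d, |q i - 1/(d:ℝ)| := by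
    have hsub : ∑ i ∈ Finset.range d, (1/(d:ℝ) - q i) = 1 - ∑ i ∈ Finset.range d, q i := by
      rw [Finset.sum_sub_distrib, Finset.sum_const, Finset.card_range, nsmul_eq_mul,
        mul_one_div_cancel (ne_of_gt hdR)]
    calc (1:ℝ) - (d:ℝ)/f X ≤ ∑ i ∈ Finset.range d, (1/(d:ℝ) - q i) := by
          rw [hsub]; linarith
      _ ≤ ∑ i ∈ Finset.range d, |q i - 1/(d:ℝ)| :=
          Finset.sum_le_sum (fun i _ => by rw [abs_sub_comm]; exact le_abs_self _)
  have hS2 : (0:ℝ) ≤ ∑' i : ℕ, q (i + d) := tsum_nonneg (fun i => hq0 _)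
  have key : 1 - Real.exp (-(X:ℝ)*s/2) ≤ ∑ i ∈ Finset.range d, |q i - 1/(d:ℝ)| := by
    have : (d:ℝ)/f X ≤ Real.exp (-(X:ℝ)*s/2) := le_of_lt hgf
    linarith
  rw [TVu]
  linarith
end

section
/- Let D be a dimension function satisfying the regularized Boltzmann entropy hypothesis with S̃ strictly increasing in each coordinate, and let a ∈ ℝ^{L+1} with a > 0. Then there exists δ⁰ : ℕ → ℝ with δ⁰ X > 0 for all X and lim_{X→∞} δ⁰ X = 0 such that for every δ ∈ Δ with δ X > δ⁰ X for all X, the shell dimension D_{a,δ}(X) is positive for all sufficiently large X and lim_{X→∞} (1/X)·log D_{a,δ}(X) = S̃ a. (Lemma 2 of the paper.) -/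
open Filter Topology

private lemma shell_mono_aux {L : ℕ} {D : ℕ → (Fin (L + 1) → ℝ) → ℕ} (hD : IsDimFun L D)
    {a : Fin (L + 1) → ℝ} (ha : ∀ i, 0 < a i) {ε : ℝ}
    (δ : ℕ → ℝ) (X : ℕ) (hεδ : ε ≤ δ X) :
    D X (fun i => (1 + ε) * a i) - D X (fun i => (1 - ε) * a i) ≤ shellDim L D a δ X := by
  have h1 : D X (fun i => (1 + ε) * a i) ≤ D X (fun i => (1 + δ X) * a i) :=
    hD.2 X _ _ fun i => by nlinarith [ha i]
  have h2 : D X (fun i => (1 - δ X) * a i) ≤ D X (fun i => (1 - ε) * a i) :=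
    hD.2 X _ _ fun i => by nlinarith [ha i]
  unfold shellDim; omega

private lemma lemA {L : ℕ} {D : ℕ → (Fin (L + 1) → ℝ) → ℕ} {S : (Fin (L + 1) → ℝ) → ℝ}
    (hD : IsDimFun L D) (hS : RegBoltz L D S) (hSI : StrictInc L S)
    {a : Fin (L + 1) → ℝ} (ha : ∀ i, 0 < a i) (α : ℝ) (hα : 0 < α) :
    ∃ ε : ℝ, 0 < ε ∧ ε ≤ α ∧ ε ≤ 1/2 ∧ ∃ N : ℕ, ∀ X ≥ N,
      1 ≤ D X (fun i => (1 + ε) * a i) - D X (fun i => (1 - ε) * a i) ∧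
      S a - α ≤
        Real.log ((D X (fun i => (1 + ε) * a i) - D X (fun i => (1 - ε) * a i) : ℕ)) / X := by
  classical
  have hc1 : Continuous fun t : ℝ => S (fun i => (1 + t) * a i) :=
    hS.1.comp (continuous_pi fun i => by continuity)
  have hc2 : Continuous fun t : ℝ => S (fun i => (1 - t) * a i) :=
    hS.1.comp (continuous_pi fun i => by continuity)
  have hcont : Continuous fun t : ℝ =>
      S (fun i => (1 + t) * a i) - S (fun i => (1 - t) * a i) := hc1.sub hc2
  have h0 : (fun i => (1 + (0:ℝ)) * a i) = a := funext fun i => by ring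
  have h0' : (fun i => (1 - (0:ℝ)) * a i) = a := funext fun i => by ring
  obtain ⟨d, hd, hball⟩ := Metric.continuousAt_iff.mp hcont.continuousAt α hα
  set ε := min (d/2) (min α (1/2)) with hεdef
  have hε0 : 0 < ε := by positivity
  have hεα : ε ≤ α := le_trans (min_le_right _ _) (min_le_left _ _)
  have hε12 : ε ≤ 1/2 := le_trans (min_le_right _ _) (min_le_right _ _)
  refine ⟨ε, hε0, hεα, hε12, ?_⟩
  set b := fun i => (1 - ε) * a i with hbdef
  set c := fun i => (1 + ε) * a i with hcdef
  have hbpos : ∀ i, 0 < b i := fun i => by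
    have := ha i; simp only [hbdef]; nlinarith
  have hcpos : ∀ i, 0 < c i := fun i => by
    have := ha i; simp only [hcdef]; nlinarith
  have hbc : ∀ i, b i ≤ c i := fun i => by
    have := ha i; simp only [hbdef, hcdef]; nlinarith
  have hbne : b ≠ c := by
    intro h
    have := congrFun h 0
    simp only [hbdef, hcdef] at this
    nlinarith [ha 0]
  have hSbc : S b < S c := hSI b c hbpos hcpos hbc hbne
  set η := (S c - S b) / 3 with hηdef
  have hη : 0 < η := by simp only [hηdef]; linarith
  -- bound on S c − S b from continuity
  have hdist : |S c - S b| < α := by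
    have hεd : dist ε 0 < d := by
      rw [Real.dist_eq, sub_zero, abs_of_pos hε0]
      calc ε ≤ d/2 := min_le_left _ _
        _ < d := by linarith
    have := hball hεd
    rw [Real.dist_eq, h0, h0', sub_self, sub_zero] at this
    exact this
  have hηα : η < α / 2 := by
    have : S c - S b < α := lt_of_le_of_lt (le_abs_self _) hdist
    simp only [hηdef]; linarith
  have hac : S a ≤ S c := by
    refine le_of_lt (hSI a c ha hcpos (fun i => by have := ha i; simp only [hcdef]; nlinarith) ?_)
    intro h
    have := congrFun h 0
    simp only [hcdef] at this
    nlinarith [ha 0]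
  obtain ⟨N₁, hN₁⟩ := Metric.tendsto_atTop.mp (hS.2 c hcpos) η hη
  obtain ⟨N₂, hN₂⟩ := Metric.tendsto_atTop.mp (hS.2 b hbpos) η hη
  obtain ⟨n₀, hn₀⟩ := exists_nat_ge (max (Real.log 2 / η) (2 * Real.log 2 / α))
  refine ⟨max (max N₁ N₂) (max n₀ 1), fun X hX => ?_⟩
  have hX1 : 1 ≤ X := le_trans (le_max_right _ _) (le_trans (le_max_right _ _) hX)
  have hXn₀ : (n₀ : ℝ) ≤ (X : ℝ) := by
    exact_mod_cast le_trans (le_max_left _ _) (le_trans (le_max_right _ _) hX)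
  have hXR : (0:ℝ) < X := by exact_mod_cast hX1
  have hlog2 : (0:ℝ) < Real.log 2 := Real.log_pos one_lt_two
  have hXη : Real.log 2 ≤ η * (X:ℝ) := by
    have h1 : Real.log 2 / η ≤ (X:ℝ) := le_trans (le_max_left _ _) (le_trans hn₀ hXn₀)
    calc Real.log 2 = (Real.log 2 / η) * η := by field_simp
      _ ≤ (X:ℝ) * η := by apply mul_le_mul_of_nonneg_right h1 hη.le
      _ = η * (X:ℝ) := mul_comm _ _
  have hXα : Real.log 2 / (X:ℝ) ≤ α / 2 := by
    have h1 : 2 * Real.log 2 / α ≤ (X:ℝ) := le_trans (le_max_right _ _) (le_trans hn₀ hXn₀)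
    rw [div_le_div_iff₀ hXR (by norm_num : (0:ℝ) < 2)]
    calc Real.log 2 * 2 = (2 * Real.log 2 / α) * α := by field_simp
      _ ≤ (X:ℝ) * α := mul_le_mul_of_nonneg_right h1 hα.le
      _ = α * (X:ℝ) := mul_comm _ _
  have hdb1 : (1:ℝ) ≤ (D X b : ℝ) := by exact_mod_cast hD.1 X hX1 b
  have hdc1 : (1:ℝ) ≤ (D X c : ℝ) := by exact_mod_cast hD.1 X hX1 c
  -- bounds from convergence
  have hu : Real.log (D X c) / X > S c - η := by
    have := hN₁ X (le_trans (le_max_left _ _) (le_trans (le_max_left _ _) hX))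
    rw [Real.dist_eq] at this
    have := abs_lt.mp this
    linarith [this.2, this.1]
  have hl : Real.log (D X b) / X < S b + η := by
    have := hN₂ X (le_trans (le_max_right _ _) (le_trans (le_max_left _ _) hX))
    rw [Real.dist_eq] at this
    have := abs_lt.mp this
    linarith [this.2]
  have hu' : Real.exp ((S c - η) * X) < (D X c : ℝ) := by
    rw [← Real.lt_log_iff_exp_lt (by linarith)]
    rw [gt_iff_lt, lt_div_iff₀ hXR] at hu
    linarith
  have hl' : (D X b : ℝ) < Real.exp ((S b + η) * X) := by
    rw [← Real.log_lt_iff_lt_exp (by linarith)]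
    rw [div_lt_iff₀ hXR] at hl
    linarith
  have hkey : 2 * (D X b : ℝ) < (D X c : ℝ) := by
    have h2 : (2:ℝ) ≤ Real.exp (η * X) := by
      calc (2:ℝ) = Real.exp (Real.log 2) := (Real.exp_log (by norm_num)).symm
        _ ≤ Real.exp (η * X) := Real.exp_le_exp.mpr hXη
    have heq : Real.exp ((S c - η) * X) = Real.exp ((S b + η) * X) * Real.exp (η * X) := by
      rw [← Real.exp_add]
      congr 1
      have : S c - η = (S b + η) + η := by simp only [hηdef]; ring
      rw [this]; ring
    have hexp_pos : (0:ℝ) < Real.exp ((S b + η) * X) := Real.exp_pos _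
    calc 2 * (D X b : ℝ) < 2 * Real.exp ((S b + η) * X) := by linarith
      _ ≤ Real.exp ((S b + η) * X) * Real.exp (η * X) := by nlinarith
      _ = Real.exp ((S c - η) * X) := heq.symm
      _ < (D X c : ℝ) := hu'
  have hkeyN : 2 * D X b < D X c := by exact_mod_cast hkey
  have h1shell : 1 ≤ D X c - D X b := by
    have := hD.1 X hX1 b
    omega
  refine ⟨h1shell, ?_⟩
  have hcast : ((D X c - D X b : ℕ) : ℝ) = (D X c : ℝ) - (D X b : ℝ) := by
    have : D X b ≤ D X c := by omega
    exact Nat.cast_sub this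
  have hhalf : Real.exp ((S c - η) * X) / 2 ≤ ((D X c - D X b : ℕ) : ℝ) := by
    rw [hcast]
    linarith [hu', hkey]
  have hlogshell : (S c - η) * X - Real.log 2 ≤ Real.log ((D X c - D X b : ℕ) : ℝ) := by
    have h1 : Real.log (Real.exp ((S c - η) * X) / 2) ≤ Real.log ((D X c - D X b : ℕ) : ℝ) :=
      Real.log_le_log (by positivity) hhalf
    rwa [Real.log_div (Real.exp_ne_zero _) (by norm_num), Real.log_exp] at h1
  have hfin : ((S c - η) * X - Real.log 2) / X ≤
      Real.log ((D X c - D X b : ℕ) : ℝ) / X := by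
    exact div_le_div_of_nonneg_right hlogshell hXR.le
  have heval : ((S c - η) * X - Real.log 2) / X = (S c - η) - Real.log 2 / X := by
    field_simp
  rw [heval] at hfin
  calc S a - α ≤ (S c - η) - Real.log 2 / X := by linarith
    _ ≤ _ := hfin

theorem stmt_10_test : True := trivial

theorem stmt_10' {L : ℕ} (D : ℕ → (Fin (L + 1) → ℝ) → ℕ) (S : (Fin (L + 1) → ℝ) → ℝ)
    (hD : IsDimFun L D) (hS : RegBoltz L D S) (hSI : StrictInc L S)
    (a : Fin (L + 1) → ℝ) (ha : ∀ i, 0 < a i) :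
    ∃ δ₀ : ℕ → ℝ, (∀ X : ℕ, 0 < δ₀ X) ∧ Tendsto δ₀ atTop (nhds 0) ∧
      ∀ δ : ℕ → ℝ, IsDelta δ → (∀ X : ℕ, δ₀ X < δ X) →
        (∃ X₀ : ℕ, ∀ X ≥ X₀, 1 ≤ shellDim L D a δ X) ∧
        Tendsto (fun X : ℕ => Real.log (shellDim L D a δ X) / X)
          atTop (nhds (S a)) := by
  classical
  choose eps heps0 hepsα heps12 N hN using fun n : ℕ =>
    lemA hD hS hSI ha (1/((n:ℝ)+1)) (by positivity)
  set M : ℕ → ℕ := fun n => n + 1 + (Finset.range (n+1)).sup N with hMdef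
  have hMN : ∀ n, N n ≤ M n := by
    intro n
    have h1 : N n ≤ (Finset.range (n+1)).sup N := Finset.le_sup (Finset.self_mem_range_succ n)
    simp only [hMdef]
    omega
  have hMge : ∀ n, n + 1 ≤ M n := fun n => by simp only [hMdef]; omega
  set idx : ℕ → ℕ := fun X => Nat.findGreatest (fun n => M n ≤ X) X with hidxdef
  have hidx_ge : ∀ n X, M n ≤ X → n ≤ idx X := by
    intro n X h
    exact Nat.le_findGreatest (by have := hMge n; omega) h
  have hidx_spec : ∀ X, M 0 ≤ X → M (idx X) ≤ X := by
    intro X h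
    exact Nat.findGreatest_spec (P := fun n => M n ≤ X) (Nat.zero_le X) h
  refine ⟨fun X => eps (idx X), fun X => heps0 _, ?_, ?_⟩
  · have hidxT : Tendsto idx atTop atTop :=
      tendsto_atTop_atTop.mpr fun n => ⟨M n, fun X h => hidx_ge n X h⟩
    have hTo : Tendsto (fun X => 1/((idx X : ℝ)+1)) atTop (nhds 0) :=
      tendsto_one_div_add_atTop_nhds_zero_nat.comp hidxT
    exact squeeze_zero' (Filter.Eventually.of_forall fun X => (heps0 _).le)
      (Filter.Eventually.of_forall fun X => hepsα _) hTo
  intro δ hδ hgt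
  have key : ∀ X, M 0 ≤ X → 1 ≤ shellDim L D a δ X ∧
      S a - 1/((idx X : ℝ)+1) ≤ Real.log (shellDim L D a δ X) / X := by
    intro X hX
    have hMk := hidx_spec X hX
    have hXN : N (idx X) ≤ X := le_trans (hMN _) hMk
    obtain ⟨h1, h2⟩ := hN (idx X) X hXN
    have hmono : D X (fun i => (1 + eps (idx X)) * a i) -
        D X (fun i => (1 - eps (idx X)) * a i) ≤ shellDim L D a δ X :=
      shell_mono_aux hD ha δ X (hgt X).le
    refine ⟨by omega, ?_⟩
    have hX1 : 1 ≤ X := le_trans (hMge 0) hX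
    have hXR : (0:ℝ) < X := by exact_mod_cast hX1
    have hc1 : (1:ℝ) ≤ ((D X (fun i => (1 + eps (idx X)) * a i) -
        D X (fun i => (1 - eps (idx X)) * a i) : ℕ) : ℝ) := by exact_mod_cast h1
    have hlog : Real.log ((D X (fun i => (1 + eps (idx X)) * a i) -
        D X (fun i => (1 - eps (idx X)) * a i) : ℕ)) ≤ Real.log (shellDim L D a δ X) :=
      Real.log_le_log (by linarith) (by exact_mod_cast hmono)
    calc S a - 1/((idx X:ℝ)+1) ≤ Real.log ((D X (fun i => (1 + eps (idx X)) * a i) -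
          D X (fun i => (1 - eps (idx X)) * a i) : ℕ)) / X := h2
      _ ≤ _ := div_le_div_of_nonneg_right hlog hXR.le
  refine ⟨⟨M 0, fun X hX => (key X hX).1⟩, ?_⟩
  rw [Metric.tendsto_nhds]
  intro r hr
  have hg : Continuous fun t : ℝ => S (fun i => (1 + t) * a i) :=
    hS.1.comp (continuous_pi fun i => by continuity)
  obtain ⟨d, hd, hball⟩ := Metric.continuousAt_iff.mp hg.continuousAt (r/2) (by positivity)
  set ε' := min (d/2) (1/2) with hε'def
  have hε'0 : 0 < ε' := by positivity
  set c' : Fin (L+1) → ℝ := fun i => (1 + ε') * a i with hc'def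
  have hc'pos : ∀ i, 0 < c' i := fun i => by have := ha i; simp only [hc'def]; nlinarith
  have h0 : (fun i => (1 + (0:ℝ)) * a i) = a := funext fun i => by ring
  have hG : |S c' - S a| < r/2 := by
    have hεd : dist ε' 0 < d := by
      rw [Real.dist_eq, sub_zero, abs_of_pos hε'0]
      calc ε' ≤ d/2 := min_le_left _ _
        _ < d := by linarith
    have := hball hεd
    rwa [Real.dist_eq, h0] at this
  have ev1 : ∀ᶠ X in atTop, |Real.log (D X c') / X - S c'| < r/2 := by
    obtain ⟨Nu, hNu⟩ := Metric.tendsto_atTop.mp (hS.2 c' hc'pos) (r/2) (by positivity)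
    filter_upwards [eventually_ge_atTop Nu] with X hX
    have := hNu X hX
    rwa [Real.dist_eq] at this
  have ev2 : ∀ᶠ X in atTop, δ X < ε' := hδ.2.eventually (gt_mem_nhds hε'0)
  obtain ⟨n₀, hn₀⟩ := exists_nat_one_div_lt hr
  filter_upwards [eventually_ge_atTop (M 0), eventually_ge_atTop (M n₀), ev1, ev2]
    with X hX0 hXn₀ h1u h2u
  obtain ⟨hsh1, hsh2⟩ := key X hX0
  have hk : n₀ ≤ idx X := hidx_ge n₀ X hXn₀
  have hfrac : 1/((idx X:ℝ)+1) ≤ 1/((n₀:ℝ)+1) := by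
    apply one_div_le_one_div_of_le (by positivity)
    have : (n₀:ℝ) ≤ (idx X : ℝ) := by exact_mod_cast hk
    linarith
  have hlower : S a - r < Real.log (shellDim L D a δ X) / X := by
    have h6 := lt_of_le_of_lt hfrac hn₀
    linarith
  have hX1 : 1 ≤ X := le_trans (hMge 0) hX0
  have hXR : (0:ℝ) < X := by exact_mod_cast hX1
  have hshle : shellDim L D a δ X ≤ D X c' := by
    have h1 : D X (fun i => (1 + δ X) * a i) ≤ D X c' :=
      hD.2 X _ _ fun i => by have := ha i; simp only [hc'def]; nlinarith [h2u.le]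
    exact le_trans (Nat.sub_le _ _) h1
  have hshR : (1:ℝ) ≤ (shellDim L D a δ X : ℝ) := by exact_mod_cast hsh1
  have hlogle : Real.log (shellDim L D a δ X) ≤ Real.log (D X c') :=
    Real.log_le_log (by linarith) (by exact_mod_cast hshle)
  have hupper : Real.log (shellDim L D a δ X) / X < S a + r := by
    have h3 : Real.log (D X c') / X < S c' + r/2 := by
      have := abs_lt.mp h1u
      linarith [this.2]
    have h4 : Real.log (shellDim L D a δ X) / X ≤ Real.log (D X c') / X :=
      div_le_div_of_nonneg_right hlogle hXR.le
    have h5 : S c' < S a + r/2 := by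
      have := abs_lt.mp hG
      linarith [this.2]
    linarith
  rw [Real.dist_eq]
  exact abs_lt.mpr ⟨by linarith, by linarith⟩

/-- Lemma 2 of the paper. -/
theorem stmt_10 {L : ℕ} (D : ℕ → (Fin (L + 1) → ℝ) → ℕ) (S : (Fin (L + 1) → ℝ) → ℝ)
    (hD : IsDimFun L D) (hS : RegBoltz L D S) (hSI : StrictInc L S)
    (a : Fin (L + 1) → ℝ) (ha : ∀ i, 0 < a i) :
    ∃ δ₀ : ℕ → ℝ, (∀ X : ℕ, 0 < δ₀ X) ∧ Tendsto δ₀ atTop (nhds 0) ∧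
      ∀ δ : ℕ → ℝ, IsDelta δ → (∀ X : ℕ, δ₀ X < δ X) →
        (∃ X₀ : ℕ, ∀ X ≥ X₀, 1 ≤ shellDim L D a δ X) ∧
        Tendsto (fun X : ℕ => Real.log (shellDim L D a δ X) / X)
          atTop (nhds (S a)) := by
  exact stmt_10' D S hD hS hSI a ha
end

section
/- Let D be a dimension function satisfying the regularized Boltzmann entropy hypothesis with S̃ strictly increasing in each coordinate, let a, a' ∈ ℝ^{L+1} with a > 0, a' > 0 and S̃ a = S̃ a', and let δ ∈ Δ. If η : ℕ → ℝ satisfies D X ((1−δ X)•a) ≤ D X ((1+η X)•a') ≤ D X ((1+δ X)•a) for every X ≥ 1, then lim_{X→∞} η X = 0. (The nonempty-window case of Lemma 3 of the paper: any selection from the window A_X tends to 0.) -/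
open Filter Topology

lemma aux_small_lt (g : ℝ → ℝ) (hg : Continuous g) (c : ℝ) (h : g 0 < c) :
    ∃ t : ℝ, 0 < t ∧ t < 1 ∧ g t < c := by
  have h1 : ∀ᶠ t in 𝓝 (0:ℝ), g t < c :=
    Filter.Tendsto.eventually_lt_const h hg.continuousAt
  have h2 : ∀ᶠ t in 𝓝[>] (0:ℝ), t ∈ Set.Ioo (0:ℝ) 1 :=
    Ioo_mem_nhdsGT_of_mem (by constructor <;> norm_num)
  obtain ⟨t, ht, hm⟩ := ((h1.filter_mono nhdsWithin_le_nhds).and h2).exists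
  exact ⟨t, hm.1, hm.2, ht⟩

lemma aux_small_gt (g : ℝ → ℝ) (hg : Continuous g) (c : ℝ) (h : c < g 0) :
    ∃ t : ℝ, 0 < t ∧ t < 1 ∧ c < g t := by
  obtain ⟨t, h1, h2, h3⟩ := aux_small_lt (fun t => -g t) (hg.neg) (-c) (by simpa using h)
  exact ⟨t, h1, h2, by simpa using h3⟩

/-- Nonempty-window case of Lemma 3: any selection from the window `A_X` tends to `0`. -/
theorem stmt_11 {L : ℕ} (D : ℕ → (Fin (L + 1) → ℝ) → ℕ) (S : (Fin (L + 1) → ℝ) → ℝ)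
    (hD : IsDimFun L D) (hS : RegBoltz L D S) (hSI : StrictInc L S)
    (a a' : Fin (L + 1) → ℝ) (ha : ∀ i, 0 < a i) (ha' : ∀ i, 0 < a' i)
    (heq : S a = S a')
    (δ : ℕ → ℝ) (hδ : IsDelta δ)
    (η : ℕ → ℝ)
    (hη : ∀ X : ℕ, 1 ≤ X →
      D X (fun i => (1 - δ X) * a i) ≤ D X (fun i => (1 + η X) * a' i) ∧
      D X (fun i => (1 + η X) * a' i) ≤ D X (fun i => (1 + δ X) * a i)) :
    Tendsto η atTop (nhds 0) := by
  obtain ⟨hD1, hD2⟩ := hD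
  obtain ⟨hScont, hSlim⟩ := hS
  rw [NormedAddCommGroup.tendsto_nhds_zero]
  intro ε hε
  set ε0 : ℝ := min ε (1/2) with hε0def
  have hε0 : 0 < ε0 := lt_min hε (by norm_num)
  have hε0half : ε0 ≤ 1/2 := min_le_right _ _
  have hε0ε : ε0 ≤ ε := min_le_left _ _
  have hcontp : Continuous (fun t : ℝ => S (fun i => (1 + t) * a i)) :=
    hScont.comp (continuous_pi fun i => (continuous_const.add continuous_id).mul continuous_const)
  have hcontm : Continuous (fun t : ℝ => S (fun i => (1 - t) * a i)) :=
    hScont.comp (continuous_pi fun i => (continuous_const.sub continuous_id).mul continuous_const)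
  have ha0 : (fun i => (1 + (0:ℝ)) * a i) = a := by funext i; ring
  have ha0' : (fun i => (1 - (0:ℝ)) * a i) = a := by funext i; ring
  -- upper bound
  have hup : ∀ᶠ X in atTop, η X < ε0 := by
    have hlt1 : S a' < S (fun i => (1 + ε0) * a' i) := by
      apply hSI a' _ ha' (fun i => mul_pos (by linarith) (ha' i))
        (fun i => by nlinarith [ha' i]) ?_
      intro hcon
      have := congrFun hcon 0
      nlinarith [ha' 0]
    obtain ⟨ε', hε'0, hε'1, hε'lt⟩ := aux_small_lt (fun t => S (fun i => (1 + t) * a i)) hcontp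
      (S (fun i => (1 + ε0) * a' i)) (by show S (fun i => (1 + (0:ℝ)) * a i) < _; rw [ha0, heq]; exact hlt1)
    have hlimA : Tendsto (fun X : ℕ => Real.log (D X (fun i => (1 + ε') * a i)) / X) atTop
        (𝓝 (S (fun i => (1 + ε') * a i))) := hSlim _ (fun i => mul_pos (by linarith) (ha i))
    have hlimB : Tendsto (fun X : ℕ => Real.log (D X (fun i => (1 + ε0) * a' i)) / X) atTop
        (𝓝 (S (fun i => (1 + ε0) * a' i))) := hSlim _ (fun i => mul_pos (by linarith) (ha' i))
    have hev := hlimA.eventually_lt hlimB hε'lt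
    have hevδ : ∀ᶠ X in atTop, δ X < ε' := Filter.Tendsto.eventually_lt_const hε'0 hδ.2
    filter_upwards [hev, hevδ, eventually_ge_atTop 1] with X hX1 hX2 hX3
    by_contra hcon
    push_neg at hcon
    have hXpos : (0:ℝ) < X := by exact_mod_cast hX3
    have hchain : D X (fun i => (1 + ε0) * a' i) ≤ D X (fun i => (1 + ε') * a i) :=
      calc D X (fun i => (1 + ε0) * a' i) ≤ D X (fun i => (1 + η X) * a' i) :=
            hD2 _ _ _ (fun i => by nlinarith [ha' i])
        _ ≤ D X (fun i => (1 + δ X) * a i) := (hη X hX3).2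
        _ ≤ D X (fun i => (1 + ε') * a i) := hD2 _ _ _ (fun i => by nlinarith [ha i])
    have h1le : (1:ℝ) ≤ (D X (fun i => (1 + ε0) * a' i) : ℝ) := by
      exact_mod_cast hD1 X hX3 _
    have hlog : Real.log (D X (fun i => (1 + ε0) * a' i)) ≤
        Real.log (D X (fun i => (1 + ε') * a i)) :=
      Real.log_le_log (by linarith) (by exact_mod_cast hchain)
    have := (div_le_div_iff_of_pos_right hXpos).mpr hlog
    linarith
  -- lower bound
  have hlo : ∀ᶠ X in atTop, -ε0 < η X := by
    have hlt2 : S (fun i => (1 - ε0) * a' i) < S a' := by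
      apply hSI _ a' (fun i => mul_pos (by linarith) (ha' i)) ha'
        (fun i => by nlinarith [ha' i]) ?_
      intro hcon
      have := congrFun hcon 0
      nlinarith [ha' 0]
    obtain ⟨ε', hε'0, hε'1, hε'lt⟩ := aux_small_gt (fun t => S (fun i => (1 - t) * a i)) hcontm
      (S (fun i => (1 - ε0) * a' i)) (by show _ < S (fun i => (1 - (0:ℝ)) * a i); rw [ha0', heq]; exact hlt2)
    have hlimA : Tendsto (fun X : ℕ => Real.log (D X (fun i => (1 - ε') * a i)) / X) atTop
        (𝓝 (S (fun i => (1 - ε') * a i))) := hSlim _ (fun i => mul_pos (by linarith) (ha i))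
    have hlimB : Tendsto (fun X : ℕ => Real.log (D X (fun i => (1 - ε0) * a' i)) / X) atTop
        (𝓝 (S (fun i => (1 - ε0) * a' i))) := hSlim _ (fun i => mul_pos (by linarith) (ha' i))
    have hev := hlimB.eventually_lt hlimA hε'lt
    have hevδ : ∀ᶠ X in atTop, δ X < ε' := Filter.Tendsto.eventually_lt_const hε'0 hδ.2
    filter_upwards [hev, hevδ, eventually_ge_atTop 1] with X hX1 hX2 hX3
    by_contra hcon
    push_neg at hcon
    have hXpos : (0:ℝ) < X := by exact_mod_cast hX3
    have hchain : D X (fun i => (1 - ε') * a i) ≤ D X (fun i => (1 - ε0) * a' i) :=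
      calc D X (fun i => (1 - ε') * a i) ≤ D X (fun i => (1 - δ X) * a i) :=
            hD2 _ _ _ (fun i => by nlinarith [ha i])
        _ ≤ D X (fun i => (1 + η X) * a' i) := (hη X hX3).1
        _ ≤ D X (fun i => (1 - ε0) * a' i) := hD2 _ _ _ (fun i => by nlinarith [ha' i])
    have h1le : (1:ℝ) ≤ (D X (fun i => (1 - ε') * a i) : ℝ) := by
      exact_mod_cast hD1 X hX3 _
    have hlog : Real.log (D X (fun i => (1 - ε') * a i)) ≤
        Real.log (D X (fun i => (1 - ε0) * a' i)) :=
      Real.log_le_log (by linarith) (by exact_mod_cast hchain)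
    have := (div_le_div_iff_of_pos_right hXpos).mpr hlog
    linarith
  filter_upwards [hup, hlo] with X h1 h2
  rw [Real.norm_eq_abs, abs_lt]
  constructor <;> linarith
end

section
/- Let D be a dimension function satisfying the regularized Boltzmann entropy hypothesis with S̃ strictly increasing in each coordinate, let a, a' ∈ ℝ^{L+1} with a > 0, a' > 0 and S̃ a = S̃ a', and let δ ∈ Δ. If η : ℕ → ℝ satisfies, for every X ≥ 1, both D X ((1+η X − 1/X)•a') ≤ D X ((1−δ X)•a) and D X ((1+δ X)•a) ≤ D X ((1+η X + 1/X)•a'), then lim_{X→∞} η X = 0. (The empty-window case of Lemma 3 of the paper.) -/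
open Filter Topology

/-- Empty-window case of Lemma 3. -/
theorem stmt_12 {L : ℕ} (D : ℕ → (Fin (L + 1) → ℝ) → ℕ) (S : (Fin (L + 1) → ℝ) → ℝ)
    (hD : IsDimFun L D) (hS : RegBoltz L D S) (hSI : StrictInc L S)
    (a a' : Fin (L + 1) → ℝ) (ha : ∀ i, 0 < a i) (ha' : ∀ i, 0 < a' i)
    (heq : S a = S a')
    (δ : ℕ → ℝ) (hδ : IsDelta δ)
    (η : ℕ → ℝ)
    (hη : ∀ X : ℕ, 1 ≤ X →
      D X (fun i => (1 + η X - 1 / (X : ℝ)) * a' i) ≤ D X (fun i => (1 - δ X) * a i) ∧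
      D X (fun i => (1 + δ X) * a i) ≤ D X (fun i => (1 + η X + 1 / (X : ℝ)) * a' i)) :
    Tendsto η atTop (nhds 0) := by
  have main : ∀ ε : ℝ, 0 < ε → ε ≤ 1/2 → ∀ᶠ X : ℕ in atTop, |η X| < ε := by
    intro ε hε hε2
    have hev : ∀ᶠ X : ℕ in atTop, 1 ≤ X ∧ (2/ε : ℝ) ≤ X := by
      filter_upwards [Filter.eventually_ge_atTop (⌈(2/ε : ℝ)⌉₊ + 1)] with X hX
      constructor
      · omega
      · calc (2/ε : ℝ) ≤ ⌈(2/ε : ℝ)⌉₊ := Nat.le_ceil _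
          _ ≤ X := by exact_mod_cast Nat.le_of_succ_le hX
    have hfa := hS.2 a ha
    have hupper : ∀ᶠ X : ℕ in atTop, η X < ε := by
      by_contra hc
      rw [Filter.not_eventually] at hc
      set b' : Fin (L+1) → ℝ := fun i => (1 + ε/2) * a' i with hb'
      have hb'pos : ∀ i, 0 < b' i := fun i => by
        have := ha' i; simp only [hb']; nlinarith
      have hSlt : S a < S b' := by
        rw [heq]
        refine hSI a' b' ha' hb'pos (fun i => ?_) ?_
        · have := (ha' i).le; simp only [hb']; nlinarith
        · intro h
          have h0 := congrFun h 0
          simp only [hb'] at h0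
          have := ha' 0; nlinarith
      have hfb := hS.2 b' hb'pos
      set c : ℝ := (S a + S b') / 2 with hc'
      have h1 : ∀ᶠ X : ℕ in atTop, Real.log (D X a) / X < c :=
        hfa.eventually_lt_const (by simp only [hc']; linarith)
      have h2 : ∀ᶠ X : ℕ in atTop, c < Real.log (D X b') / X :=
        hfb.eventually_const_lt (by simp only [hc']; linarith)
      obtain ⟨X, hηX, ⟨hX1, hX2⟩, hXa, hXb⟩ :=
        (hc.and_eventually (hev.and (h1.and h2))).exists
      rw [not_lt] at hηX
      have hXpos : (0:ℝ) < X := lt_of_lt_of_le (by positivity) hX2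
      have hinv : (1:ℝ)/X ≤ ε/2 := by
        rw [div_le_div_iff₀ hXpos two_pos]
        have := (div_le_iff₀ hε).mp hX2
        nlinarith
      have key1 : D X b' ≤ D X (fun i => (1 + η X - 1/(X:ℝ)) * a' i) :=
        hD.2 X _ _ (fun i => mul_le_mul_of_nonneg_right (by linarith) (ha' i).le)
      have key3 : D X (fun i => (1 - δ X) * a i) ≤ D X a :=
        hD.2 X _ _ (fun i => by
          have := hδ.1 X; have := (ha i).le; nlinarith)
      have total : D X b' ≤ D X a := le_trans key1 (le_trans (hη X hX1).1 key3)
      have h0 : (0:ℝ) < D X b' := by exact_mod_cast hD.1 X hX1 b'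
      have hlog : Real.log (D X b') ≤ Real.log (D X a) :=
        Real.log_le_log h0 (by exact_mod_cast total)
      have : Real.log (D X b') / X ≤ Real.log (D X a) / X := by
        apply div_le_div_of_nonneg_right hlog hXpos.le |>.trans_eq rfl
      linarith
    have hlower : ∀ᶠ X : ℕ in atTop, -ε < η X := by
      by_contra hc
      rw [Filter.not_eventually] at hc
      set b' : Fin (L+1) → ℝ := fun i => (1 - ε/2) * a' i with hb'
      have hb'pos : ∀ i, 0 < b' i := fun i => by
        have := ha' i; simp only [hb']; nlinarith
      have hSlt : S b' < S a := by
        rw [heq]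
        refine hSI b' a' hb'pos ha' (fun i => ?_) ?_
        · have := (ha' i).le; simp only [hb']; nlinarith
        · intro h
          have h0 := congrFun h 0
          simp only [hb'] at h0
          have := ha' 0; nlinarith
      have hfb := hS.2 b' hb'pos
      set c : ℝ := (S a + S b') / 2 with hc'
      have h1 : ∀ᶠ X : ℕ in atTop, c < Real.log (D X a) / X :=
        hfa.eventually_const_lt (by simp only [hc']; linarith)
      have h2 : ∀ᶠ X : ℕ in atTop, Real.log (D X b') / X < c :=
        hfb.eventually_lt_const (by simp only [hc']; linarith)
      obtain ⟨X, hηX, ⟨hX1, hX2⟩, hXa, hXb⟩ :=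
        (hc.and_eventually (hev.and (h1.and h2))).exists
      rw [not_lt] at hηX
      have hXpos : (0:ℝ) < X := lt_of_lt_of_le (by positivity) hX2
      have hinv : (1:ℝ)/X ≤ ε/2 := by
        rw [div_le_div_iff₀ hXpos two_pos]
        have := (div_le_iff₀ hε).mp hX2
        nlinarith
      have key1 : D X a ≤ D X (fun i => (1 + δ X) * a i) :=
        hD.2 X _ _ (fun i => by
          have := hδ.1 X; have := (ha i).le; nlinarith)
      have key3 : D X (fun i => (1 + η X + 1/(X:ℝ)) * a' i) ≤ D X b' :=
        hD.2 X _ _ (fun i => mul_le_mul_of_nonneg_right (by linarith) (ha' i).le)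
      have total : D X a ≤ D X b' := le_trans key1 (le_trans (hη X hX1).2 key3)
      have h0 : (0:ℝ) < D X a := by exact_mod_cast hD.1 X hX1 a
      have hlog : Real.log (D X a) ≤ Real.log (D X b') :=
        Real.log_le_log h0 (by exact_mod_cast total)
      have : Real.log (D X a) / X ≤ Real.log (D X b') / X :=
        div_le_div_of_nonneg_right hlog hXpos.le
      linarith
    filter_upwards [hupper, hlower] with X h1 h2
    exact abs_lt.mpr ⟨h2, h1⟩
  rw [NormedAddCommGroup.tendsto_nhds_zero]
  intro ε hε
  have hm := main (min ε (1/2)) (lt_min hε (by norm_num)) (min_le_right _ _)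
  filter_upwards [hm] with X hX
  rw [Real.norm_eq_abs]
  exact lt_of_lt_of_le hX (min_le_left _ _)
end
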